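/- arXiv:1706.02602 — 6 statements merged into one kernel-verified Lean document; each statement's English description precedes it below -/
import Mathlib

section
/- Suppose strong duality holds for the problem min { g(x) : x ∈ argmin f }, where f(x) = (1/2)‖Ax − b‖², i.e., there exists a saddle point (x*, u*) of (x,u) ↦ g(x) + ⟨u, AᵀA x − Aᵀ b⟩. Then for all x ∈ ℝ^n, g(x) − g_* ≥ −‖Au*‖·√(2(f(x) − f_*)), where g_* = g(x*) and f_* = min f. -/
/-- Estimate (3.8): if `(x*, u*)` is a saddle point of
`(x,u) ↦ g(x) + ⟨u, AᵀAx − Aᵀb⟩` (i.e. `x*` minimizes `f` and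
`−AᵀAu*` is a subgradient of `g` at `x*`), then for all `x`,
`g(x) − g_* ≥ −‖Au*‖·√(2(f(x) − f_*))` with `g_* = g(x*)`, `f_* = f(x*) = min f`. -/
theorem stmt5 (n m : ℕ)
    (A : EuclideanSpace ℝ (Fin n) →L[ℝ] EuclideanSpace ℝ (Fin m))
    (b : EuclideanSpace ℝ (Fin m))
    (g : EuclideanSpace ℝ (Fin n) → ℝ)
    (hgconv : ConvexOn ℝ Set.univ g) (hglsc : LowerSemicontinuous g)
    (f : EuclideanSpace ℝ (Fin n) → ℝ)
    (hf : ∀ x, f x = (1/2) * ‖A x - b‖ ^ 2)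
    (xstar ustar : EuclideanSpace ℝ (Fin n))
    (hxstar_min : ∀ y, f xstar ≤ f y)
    (hsubgrad : ∀ x, g x ≥ g xstar +
      (inner ℝ (-(ContinuousLinearMap.adjoint A (A ustar))) (x - xstar) : ℝ)) :
    ∀ x, g x - g xstar ≥ -‖A ustar‖ * Real.sqrt (2 * (f x - f xstar)) := by
  intro x
  set c : EuclideanSpace ℝ (Fin m) := A xstar - b with hc
  -- orthogonality: ⟨c, A v⟩ = 0 for all v
  have hortho : ∀ v : EuclideanSpace ℝ (Fin n), (inner ℝ c (A v) : ℝ) = 0 := by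
    intro v
    set α : ℝ := (inner ℝ c (A v) : ℝ) with hα
    set β : ℝ := ‖A v‖ ^ 2 with hβ
    have hβ0 : 0 ≤ β := by positivity
    have key : ∀ t : ℝ, 0 ≤ t * α + t ^ 2 / 2 * β := by
      intro t
      have h1 := hxstar_min (xstar + t • v)
      rw [hf, hf] at h1
      have h2 : A (xstar + t • v) - b = c + t • A v := by
        simp [hc, map_add, map_smul]; abel
      rw [h2] at h1
      have h3 : ‖c + t • A v‖ ^ 2 = ‖c‖ ^ 2 + 2 * (t * α) + t ^ 2 * β := by
        rw [norm_add_sq_real, real_inner_smul_right, norm_smul]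
        simp [hα, hβ, mul_pow]
      rw [h3] at h1
      nlinarith
    have hne : (0:ℝ) < β + 1 := by linarith
    have h := key (-α / (β + 1))
    have h2 : 0 ≤ -α * α * (β + 1) + α ^ 2 / 2 * β := by
      have := mul_le_mul_of_nonneg_left h (le_of_lt (by positivity : (0:ℝ) < (β + 1) ^ 2))
      have hexp : (β + 1) ^ 2 * (-α / (β + 1) * α + (-α / (β + 1)) ^ 2 / 2 * β)
          = -α * α * (β + 1) + α ^ 2 / 2 * β := by
        field_simp
      linarith [hexp ▸ this]
    nlinarith [sq_nonneg α]
  -- Pythagoras: 2 * (f x - f xstar) = ‖A (x - xstar)‖ ^ 2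
  have hpyth : 2 * (f x - f xstar) = ‖A (x - xstar)‖ ^ 2 := by
    have h2 : A x - b = c + A (x - xstar) := by
      simp [hc, map_sub]
    have h3 : ‖c + A (x - xstar)‖ ^ 2 = ‖c‖ ^ 2 + ‖A (x - xstar)‖ ^ 2 := by
      rw [norm_add_sq_real, hortho (x - xstar)]; ring
    rw [hf, hf, h2, h3]
    have : A xstar - b = c := hc.symm
    rw [this]; ring
  have hsqrt : Real.sqrt (2 * (f x - f xstar)) = ‖A (x - xstar)‖ := by
    rw [hpyth, Real.sqrt_sq (norm_nonneg _)]
  -- subgradient inequality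
  have h1 := hsubgrad x
  have h2 : (inner ℝ (-(ContinuousLinearMap.adjoint A (A ustar))) (x - xstar) : ℝ)
      = -(inner ℝ (A ustar) (A (x - xstar)) : ℝ) := by
    rw [inner_neg_left, ContinuousLinearMap.adjoint_inner_left]
  have h3 : (inner ℝ (A ustar) (A (x - xstar)) : ℝ) ≤ ‖A ustar‖ * ‖A (x - xstar)‖ :=
    real_inner_le_norm _ _
  rw [hsqrt]
  rw [h2] at h1
  nlinarith
end

section
/- Let the PDHG iterates be given by y^{k+1} = y^k + σ(A x̄^k − b), x^{k+1} = prox_{τg}(x^k − τ Aᵀ y^{k+1}) with x̄^k = 2x^k − x^{k−1}, x̄^0 = x^0, and y^0 = 0. Define z^0 = x^0, z^1 = x^1, and z^k = (2x^k + x^{k−1} + ⋯ + x^1)/(k+1) for k ≥ 2. Then y^{k+1} = (k+1)σ(A z^k − b) for all k ≥ 0. -/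
/-- Identity (3.10): for PDHG iterates
`y^{k+1} = y^k + σ(Ax̄^k − b)`, `x^{k+1} = prox_{τg}(x^k − τAᵀy^{k+1})` with
`x̄^k = 2x^k − x^{k−1}`, `x̄^0 = x^0`, `y^0 = 0`, and
`z^0 = x^0`, `z^1 = x^1`, `z^k = (2x^k + x^{k−1} + ⋯ + x^1)/(k+1)` for `k ≥ 2`,
one has `y^{k+1} = (k+1)σ(Az^k − b)` for all `k ≥ 0`. -/
theorem stmt11 (n m : ℕ)
    (A : EuclideanSpace ℝ (Fin n) →L[ℝ] EuclideanSpace ℝ (Fin m))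
    (b : EuclideanSpace ℝ (Fin m))
    (g : EuclideanSpace ℝ (Fin n) → ℝ)
    (hgconv : ConvexOn ℝ Set.univ g) (hglsc : LowerSemicontinuous g)
    (σ τ : ℝ) (hσ : 0 < σ) (hτ : 0 < τ)
    (x xb z : ℕ → EuclideanSpace ℝ (Fin n))
    (y : ℕ → EuclideanSpace ℝ (Fin m))
    (hy0 : y 0 = 0)
    (hxb0 : xb 0 = x 0)
    (hxb : ∀ k : ℕ, xb (k+1) = (2 : ℝ) • x (k+1) - x k)
    (hyrec : ∀ k : ℕ, y (k+1) = y k + σ • (A (xb k) - b))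
    (hprox : ∀ k : ℕ, ∀ w,
      τ * g (x (k+1)) + (1/2) * ‖x (k+1) -
        (x k - τ • (ContinuousLinearMap.adjoint A (y (k+1))))‖ ^ 2
      ≤ τ * g w + (1/2) * ‖w -
        (x k - τ • (ContinuousLinearMap.adjoint A (y (k+1))))‖ ^ 2)
    (hz0 : z 0 = x 0) (hz1 : z 1 = x 1)
    (hz : ∀ k : ℕ, 2 ≤ k →
      z k = ((k : ℝ) + 1)⁻¹ • ((2 : ℝ) • x k + ∑ i ∈ Finset.Icc 1 (k-1), x i)) :
    ∀ k : ℕ, y (k+1) = (((k : ℝ) + 1) * σ) • (A (z k) - b) := by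
  have h1 : ∀ j : ℕ, ((j : ℝ) + 2) • z (j+1) =
      (2 : ℝ) • x (j+1) + ∑ i ∈ Finset.Icc 1 j, x i := by
    intro j
    rcases Nat.eq_zero_or_pos j with hj | hj
    · subst hj
      simp [hz1, two_smul]
    · have hzj := hz (j+1) (by omega)
      have hne : ((j : ℝ) + 2) ≠ 0 := by positivity
      have e : ((((j:ℕ)+1 : ℕ) : ℝ) + 1)⁻¹ = ((j : ℝ) + 2)⁻¹ := by
        push_cast; ring_nf
      rw [hzj]
      simp only [Nat.add_sub_cancel, e, smul_smul, mul_inv_cancel₀ hne, one_smul]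
  have key : ∀ k : ℕ, ((k : ℝ) + 2) • z (k+1) =
      ((k : ℝ) + 1) • z k + (2 : ℝ) • x (k+1) - x k := by
    intro k
    cases k with
    | zero =>
      rw [hz0, hz1]
      push_cast
      module
    | succ j =>
      have h2 := h1 (j+1)
      have h3 := h1 j
      have hsum : ∑ i ∈ Finset.Icc 1 (j+1), x i =
          (∑ i ∈ Finset.Icc 1 j, x i) + x (j+1) :=
        Finset.sum_Icc_succ_top (by omega) x
      rw [hsum] at h2
      push_cast at h2 h3 ⊢
      linear_combination (norm := module) h2 - h3
  intro k
  induction k with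
  | zero =>
    rw [hyrec 0, hy0, hxb0, hz0]
    push_cast
    module
  | succ k ih =>
    rw [hyrec (k+1), ih, hxb k]
    have keyA := congrArg A (key k)
    simp only [map_smul, map_sub, map_add] at keyA
    simp only [map_sub, map_smul]
    push_cast
    linear_combination (norm := module) (-σ) • keyA
end

section
/- Let h: ℝ^n → ℝ be convex with β-Lipschitz gradient, and let s^{k+1} = (x^{k+1} + k s^k)/(k+1). Then for any x̄ ∈ ℝ^n, ⟨∇h(x^k), x̄ − x^{k+1}⟩ ≤ k(h(s^k) − h(x̄)) − (k+1)(h(s^{k+1}) − h(x̄)) + (β/2)‖x^{k+1} − x^k‖². -/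
section Aux

variable {n : ℕ}

lemma aux_line_deriv (x y : EuclideanSpace ℝ (Fin n)) (t : ℝ) :
    HasDerivAt (fun t : ℝ => x + t • (y - x)) (y - x) t := by
  simpa using (((hasDerivAt_id t).smul_const (y - x)).const_add x)

/-- Gradient inequality for convex functions. -/
lemma aux_grad_ineq (h : EuclideanSpace ℝ (Fin n) → ℝ)
    (h' : EuclideanSpace ℝ (Fin n) → EuclideanSpace ℝ (Fin n))
    (hconv : ConvexOn ℝ Set.univ h)
    (hgrad : ∀ p, HasGradientAt h (h' p) p)
    (x y : EuclideanSpace ℝ (Fin n)) :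
    (inner ℝ (h' x) (y - x) : ℝ) ≤ h y - h x := by
  set g : ℝ → ℝ := fun t => h (x + t • (y - x)) with hg
  have hgc : ConvexOn ℝ Set.univ g := by
    have := hconv.comp_affineMap (AffineMap.lineMap x y)
    have heq : (h ∘ (AffineMap.lineMap x y : ℝ →ᵃ[ℝ] EuclideanSpace ℝ (Fin n))) = g := by
      funext t; simp [hg, AffineMap.lineMap_apply, add_comm]
    rw [heq] at this
    simpa [Set.preimage_univ] using this
  have hderiv : HasDerivAt g (inner ℝ (h' x) (y - x) : ℝ) 0 := by
    have hf : HasFDerivAt h ((InnerProductSpace.toDual ℝ _) (h' x)) ((0:ℝ) • (y - x) + x) := by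
      simpa using hasGradientAt_iff_hasFDerivAt.mp (hgrad x)
    have hc : HasDerivAt (fun t : ℝ => t • (y - x) + x) (y - x) 0 := by
      simpa using ((hasDerivAt_id (0:ℝ)).smul_const (y - x)).add_const x
    have := hf.comp_hasDerivAt (0 : ℝ) hc
    have heq : (h ∘ fun t : ℝ => t • (y - x) + x) = g := by
      funext t; simp [hg, Function.comp, add_comm]
    rw [heq] at this
    simpa [InnerProductSpace.toDual_apply_apply] using this
  have hsl := hgc.le_slope_of_hasDerivAt (Set.mem_univ (0:ℝ)) (Set.mem_univ (1:ℝ))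
    (by norm_num) hderiv
  have hslope : slope g 0 1 = h y - h x := by
    simp [slope, hg]
  rw [hslope] at hsl
  exact hsl

/-- Descent lemma. -/
lemma aux_descent (β : ℝ) (hβ : 0 ≤ β)
    (h : EuclideanSpace ℝ (Fin n) → ℝ)
    (h' : EuclideanSpace ℝ (Fin n) → EuclideanSpace ℝ (Fin n))
    (hgrad : ∀ p, HasGradientAt h (h' p) p)
    (hlip : ∀ u v, ‖h' u - h' v‖ ≤ β * ‖u - v‖)
    (x y : EuclideanSpace ℝ (Fin n)) :
    h y ≤ h x + (inner ℝ (h' x) (y - x) : ℝ) + β / 2 * ‖y - x‖ ^ 2 := by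
  set φ : ℝ → ℝ := fun t => h (x + t • (y - x)) - t * (inner ℝ (h' x) (y - x) : ℝ)
      - β / 2 * t ^ 2 * ‖y - x‖ ^ 2 with hφ
  have hφd : ∀ t : ℝ, HasDerivAt φ
      ((inner ℝ (h' (x + t • (y - x))) (y - x) : ℝ) - (inner ℝ (h' x) (y - x) : ℝ)
        - β * t * ‖y - x‖ ^ 2) t := by
    intro t
    have hf : HasFDerivAt h ((InnerProductSpace.toDual ℝ _) (h' (x + t • (y - x))))
        (x + t • (y - x)) := hgrad _
    have h1 : HasDerivAt (fun t => h (x + t • (y - x)))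
        (inner ℝ (h' (x + t • (y - x))) (y - x) : ℝ) t := by
      have := hf.comp_hasDerivAt t (aux_line_deriv x y t)
      exact this
    have h2 : HasDerivAt (fun t : ℝ => t * (inner ℝ (h' x) (y - x) : ℝ))
        (inner ℝ (h' x) (y - x) : ℝ) t := by
      simpa using (hasDerivAt_id t).mul_const (inner ℝ (h' x) (y - x) : ℝ)
    have h3 : HasDerivAt (fun t : ℝ => β / 2 * t ^ 2 * ‖y - x‖ ^ 2)
        (β * t * ‖y - x‖ ^ 2) t := by
      have := ((hasDerivAt_pow 2 t).const_mul (β / 2)).mul_const (‖y - x‖ ^ 2)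
      refine this.congr_deriv ?_
      rw [show (2:ℕ) - 1 = 1 from rfl]
      push_cast
      ring
    exact (h1.sub h2).sub h3
  have hφcont : Continuous φ := continuous_iff_continuousAt.2 fun t => (hφd t).continuousAt
  have hmono : ∀ t ∈ Set.Icc (0:ℝ) 1,
      (inner ℝ (h' (x + t • (y - x))) (y - x) : ℝ) - (inner ℝ (h' x) (y - x) : ℝ)
        - β * t * ‖y - x‖ ^ 2 ≤ 0 := by
    intro t ht
    have h1 : (inner ℝ (h' (x + t • (y - x))) (y - x) : ℝ) - (inner ℝ (h' x) (y - x) : ℝ)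
        = (inner ℝ (h' (x + t • (y - x)) - h' x) (y - x) : ℝ) := by
      rw [inner_sub_left]
    have h2 : (inner ℝ (h' (x + t • (y - x)) - h' x) (y - x) : ℝ)
        ≤ ‖h' (x + t • (y - x)) - h' x‖ * ‖y - x‖ := real_inner_le_norm _ _
    have h3 : ‖h' (x + t • (y - x)) - h' x‖ ≤ β * (t * ‖y - x‖) := by
      have hl := hlip (x + t • (y - x)) x
      have hct : ‖x + t • (y - x) - x‖ = t * ‖y - x‖ := by
        simp [norm_smul, abs_of_nonneg ht.1]
      rw [hct] at hl; exact hl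
    have h4 : ‖h' (x + t • (y - x)) - h' x‖ * ‖y - x‖ ≤ β * t * ‖y - x‖ ^ 2 := by
      nlinarith [norm_nonneg (y - x), h3]
    rw [h1]
    nlinarith [h2, h4]
  have hanti : AntitoneOn φ (Set.Icc (0:ℝ) 1) := by
    apply antitoneOn_of_deriv_nonpos (convex_Icc 0 1) hφcont.continuousOn
    · intro t _
      exact (hφd t).differentiableAt.differentiableWithinAt
    · intro t ht
      rw [interior_Icc] at ht
      rw [(hφd t).deriv]
      exact hmono t ⟨le_of_lt ht.1, le_of_lt ht.2⟩
  have h01 : φ 1 ≤ φ 0 := hanti (by norm_num) (by norm_num) (by norm_num)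
  simp only [hφ, zero_smul, add_zero, one_smul, add_sub_cancel] at h01
  nlinarith [h01]

end Aux

/-- Estimate (4.4): for convex `h` with β-Lipschitz gradient and
`s^{k+1} = (x^{k+1} + k s^k)/(k+1)`, for any `x̄`,
`⟨∇h(x^k), x̄ − x^{k+1}⟩ ≤ k(h(s^k) − h(x̄)) − (k+1)(h(s^{k+1}) − h(x̄))
  + (β/2)‖x^{k+1} − x^k‖²`. -/
theorem stmt12 (n : ℕ) (β : ℝ) (hβ : 0 ≤ β)
    (h : EuclideanSpace ℝ (Fin n) → ℝ)
    (h' : EuclideanSpace ℝ (Fin n) → EuclideanSpace ℝ (Fin n))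
    (hconv : ConvexOn ℝ Set.univ h)
    (hgrad : ∀ p, HasGradientAt h (h' p) p)
    (hlip : ∀ u v, ‖h' u - h' v‖ ≤ β * ‖u - v‖)
    (k : ℕ) (xk x1 sk s1 xbar : EuclideanSpace ℝ (Fin n))
    (hs1 : s1 = ((k : ℝ) + 1)⁻¹ • (x1 + (k : ℝ) • sk)) :
    (inner ℝ (h' xk) (xbar - x1) : ℝ)
      ≤ (k : ℝ) * (h sk - h xbar) - ((k : ℝ) + 1) * (h s1 - h xbar)
        + β / 2 * ‖x1 - xk‖ ^ 2 := by
  have hk1 : (0:ℝ) < (k:ℝ) + 1 := by positivity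
  have hcomb : ((k:ℝ) + 1) * h s1 ≤ h x1 + (k:ℝ) * h sk := by
    have ha : (0:ℝ) ≤ ((k:ℝ) + 1)⁻¹ := by positivity
    have hb : (0:ℝ) ≤ (k:ℝ) / ((k:ℝ) + 1) := by positivity
    have hab : ((k:ℝ) + 1)⁻¹ + (k:ℝ) / ((k:ℝ) + 1) = 1 := by
      field_simp
      ring
    have hs1' : s1 = ((k:ℝ) + 1)⁻¹ • x1 + ((k:ℝ) / ((k:ℝ) + 1)) • sk := by
      rw [hs1, smul_add, smul_smul]
      congr 2
      field_simp
    have hcc := hconv.2 (Set.mem_univ x1) (Set.mem_univ sk) ha hb hab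
    rw [← hs1'] at hcc
    have h2 := mul_le_mul_of_nonneg_left hcc (le_of_lt hk1)
    calc ((k:ℝ) + 1) * h s1
        ≤ ((k:ℝ) + 1) * (((k:ℝ)+1)⁻¹ • h x1 + ((k:ℝ)/((k:ℝ)+1)) • h sk) := h2
      _ = h x1 + (k:ℝ) * h sk := by
          simp only [smul_eq_mul]
          field_simp
  have hA : (inner ℝ (h' xk) (xbar - xk) : ℝ) ≤ h xbar - h xk :=
    aux_grad_ineq h h' hconv hgrad xk xbar
  have hB : h x1 ≤ h xk + (inner ℝ (h' xk) (x1 - xk) : ℝ) + β / 2 * ‖x1 - xk‖ ^ 2 :=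
    aux_descent β hβ h h' hgrad hlip xk x1
  have hsplit : (inner ℝ (h' xk) (xbar - x1) : ℝ)
      = (inner ℝ (h' xk) (xbar - xk) : ℝ) - (inner ℝ (h' xk) (x1 - xk) : ℝ) := by
    rw [← inner_sub_right]
    congr 1
    abel
  rw [hsplit]
  nlinarith [hA, hB, hcomb]
end

section
/- Define τ_0 = 1 and τ_{k+1} = τ_k / √(1 + τ_k). Then for all k ≥ 0, 2/(k+2) ≤ τ_k ≤ 3/(k+2). -/
private lemma le_of_sq_le_sq' {a b : ℝ} (ha : 0 ≤ a) (hb : 0 ≤ b) (h : a^2 ≤ b^2) : a ≤ b := by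
  nlinarith [sq_nonneg (a - b), sq_nonneg (a + b)]

/-- Stepsize bounds for the accelerated PDHG: if `τ₀ = 1` and
`τ_{k+1} = τ_k/√(1 + τ_k)`, then `2/(k+2) ≤ τ_k ≤ 3/(k+2)` for all `k`. -/
theorem stmt13 (τ : ℕ → ℝ) (h0 : τ 0 = 1)
    (hrec : ∀ k : ℕ, τ (k+1) = τ k / Real.sqrt (1 + τ k)) :
    ∀ k : ℕ, 2 / ((k : ℝ) + 2) ≤ τ k ∧ τ k ≤ 3 / ((k : ℝ) + 2) := by
  intro k
  induction k with
  | zero => norm_num [h0]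
  | succ k ih =>
    obtain ⟨hl, hu⟩ := ih
    set c : ℝ := (k : ℝ) with hcdef
    have hc : 0 ≤ c := Nat.cast_nonneg k
    have hc2 : (0:ℝ) < c + 2 := by linarith
    set t := τ k with htdef
    have ht0 : 0 < t := lt_of_lt_of_le (by positivity) hl
    have h1t : (0:ℝ) ≤ 1 + t := by linarith
    set s := Real.sqrt (1 + t) with hsdef
    have hs2 : s^2 = 1 + t := Real.sq_sqrt h1t
    have hs0 : 0 < s := Real.sqrt_pos.mpr (by linarith)
    have hlc : 2 ≤ t * (c + 2) := by
      rw [div_le_iff₀ hc2] at hl; linarith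
    have huc : t * (c + 2) ≤ 3 := by
      rw [le_div_iff₀ hc2] at hu; linarith
    have hrec' : τ (k + 1) = t / s := hrec k
    have hcast : ((k:ℕ) + 1 : ℕ) = (k:ℕ) + 1 := rfl
    have hc3 : (0:ℝ) < c + 3 := by linarith
    constructor
    · -- lower bound
      have key : 2 * s ≤ t * (c + 3) := by
        apply le_of_sq_le_sq' (by positivity) (by positivity)
        have h2 : (2 * s)^2 = 4 * (1 + t) := by rw [mul_pow, hs2]; ring
        rw [h2]
        nlinarith [mul_pos ht0 hc2, sq_nonneg t, mul_nonneg ht0.le hc,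
          mul_nonneg (mul_nonneg ht0.le ht0.le) hc]
      rw [hrec']
      push_cast
      rw [div_le_div_iff₀ (by linarith) hs0]
      linarith
    · -- upper bound
      have key : t * (c + 3) ≤ 3 * s := by
        apply le_of_sq_le_sq' (by positivity) (by positivity)
        have h2 : (3 * s)^2 = 9 * (1 + t) := by rw [mul_pow, hs2]; ring
        rw [h2]
        nlinarith [mul_pos ht0 hc2, sq_nonneg t, mul_nonneg ht0.le hc,
          mul_nonneg (mul_nonneg ht0.le ht0.le) hc]
      rw [hrec']
      push_cast
      rw [div_le_div_iff₀ hs0 (by linarith)]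
      linarith
end

section
/- In the accelerated primal scheme for 1-strongly convex g with λ‖A‖² ≤ 1 and τ_0 = 1, the iterates satisfy (σ_k/(2τ_k))‖x^k − x̄‖² + Σ_{k−1}(F_k(s^k) − g_*) + Σ_{i=0}^{k−1} σ_i²(f(x^i) − f_*) ≤ (σ_0/(2τ_0))‖x^0 − x̄‖², where F_k(x) = g(x) + Σ_{k−1}(f(x) − f_*); in particular F_k(s^k) − g_* ≤ 3‖x^0 − x̄‖²/((k+3)k) = O(1/k²). -/
open RealInnerProductSpace

lemma norm_combo {E : Type*} [NormedAddCommGroup E] [InnerProductSpace ℝ E]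
    (a b : E) (t s : ℝ) (h : t + s = 1) :
    ‖t • a + s • b‖^2 = t*‖a‖^2 + s*‖b‖^2 - t*s*‖a-b‖^2 := by
  have ha : ‖t • a + s • b‖^2 = t^2*‖a‖^2 + 2*(t*s)*(⟪a, b⟫) + s^2*‖b‖^2 := by
    rw [norm_add_sq_real, norm_smul, norm_smul, real_inner_smul_left, real_inner_smul_right,
      Real.norm_eq_abs, Real.norm_eq_abs, mul_pow, mul_pow, sq_abs, sq_abs]
    ring
  have hb : ‖a-b‖^2 = ‖a‖^2 - 2*(⟪a, b⟫) + ‖b‖^2 := norm_sub_sq_real a b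
  have hs : s = 1 - t := by linarith
  subst hs
  rw [ha, hb]; ring

lemma halfsq_convex {E : Type*} [NormedAddCommGroup E] [InnerProductSpace ℝ E] :
    ConvexOn ℝ (Set.univ : Set E) (fun x => (1/2)*‖x‖^2) := by
  refine ⟨convex_univ, fun x _ y _ a b ha hb hab => ?_⟩
  simp only [smul_eq_mul]
  rw [norm_combo x y a b hab]
  have h0 : 0 ≤ a*b*‖x-y‖^2 := by positivity
  linarith

lemma prox_strong {E : Type*} [NormedAddCommGroup E] [InnerProductSpace ℝ E]
    (g : E → ℝ) (hg : ConvexOn ℝ Set.univ (fun x => g x - (1/2)*‖x‖^2))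
    (τ : ℝ) (hτ : 0 < τ) (w xp : E)
    (hmin : ∀ y, τ * g xp + (1/2)*‖xp - w‖^2 ≤ τ * g y + (1/2)*‖y - w‖^2) (y : E) :
    τ * g xp + (1/2)*‖xp - w‖^2 + ((1+τ)/2)*‖y - xp‖^2 ≤ τ * g y + (1/2)*‖y - w‖^2 := by
  have hkey : ∀ t : ℝ, 0 < t → t ≤ 1 →
      τ * g xp + (1/2)*‖xp - w‖^2 + ((1+τ)/2)*(1-t)*‖y - xp‖^2
        ≤ τ * g y + (1/2)*‖y - w‖^2 := by
    intro t ht0 ht1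
    have hconv := hg.2 (Set.mem_univ y) (Set.mem_univ xp) (le_of_lt ht0)
      (by linarith : (0:ℝ) ≤ 1 - t) (by ring : t + (1-t) = 1)
    simp only [smul_eq_mul] at hconv
    have hn1 : ‖t • y + (1-t) • xp‖^2 = t*‖y‖^2 + (1-t)*‖xp‖^2 - t*(1-t)*‖y-xp‖^2 :=
      norm_combo y xp t (1-t) (by ring)
    have hvec : (t • y + (1-t) • xp) - w = t • (y - w) + (1-t) • (xp - w) := by
      rw [smul_sub, smul_sub]; module
    have hn2 : ‖(t • y + (1-t) • xp) - w‖^2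
        = t*‖y-w‖^2 + (1-t)*‖xp-w‖^2 - t*(1-t)*‖y-xp‖^2 := by
      rw [hvec, norm_combo (y-w) (xp-w) t (1-t) (by ring)]
      have h : (y - w) - (xp - w) = y - xp := by abel
      rw [h]
    have hmin' := hmin (t • y + (1-t) • xp)
    have hgv : g (t • y + (1-t) • xp)
        ≤ t*(g y) + (1-t)*(g xp) - (1/2)*t*(1-t)*‖y-xp‖^2 := by
      linarith [hconv, hn1]
    have hτconv : τ * g (t • y + (1-t) • xp)
        ≤ τ * (t*(g y) + (1-t)*(g xp) - (1/2)*t*(1-t)*‖y-xp‖^2) :=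
      mul_le_mul_of_nonneg_left hgv hτ.le
    have hmul : t * (τ * g xp + (1/2)*‖xp - w‖^2 + ((1+τ)/2)*(1-t)*‖y - xp‖^2)
        ≤ t * (τ * g y + (1/2)*‖y - w‖^2) := by
      nlinarith [hmin', hn2, hτconv]
    exact le_of_mul_le_mul_left hmul ht0
  refine le_of_forall_pos_le_add ?_
  intro ε hε
  have hq : (0:ℝ) < ((1+τ)/2)*‖y - xp‖^2 + 1 := by positivity
  set t : ℝ := min (ε/(((1+τ)/2)*‖y - xp‖^2 + 1)) 1 with htdef
  have ht0 : 0 < t := lt_min (by positivity) one_pos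
  have ht1 : t ≤ 1 := min_le_right _ _
  have h1 := hkey t ht0 ht1
  have h2 : ((1+τ)/2)*t*‖y - xp‖^2 ≤ ε := by
    have h3 : t ≤ ε/(((1+τ)/2)*‖y - xp‖^2 + 1) := min_le_left _ _
    have h4 := mul_le_mul_of_nonneg_right h3 (by positivity : (0:ℝ) ≤ ((1+τ)/2)*‖y - xp‖^2)
    have h5 : (ε/(((1+τ)/2)*‖y - xp‖^2 + 1))*(((1+τ)/2)*‖y - xp‖^2) ≤ ε := by
      rw [div_mul_eq_mul_div, div_le_iff₀ hq]
      nlinarith [hε.le, (by positivity : (0:ℝ) ≤ ((1+τ)/2)*‖y - xp‖^2)]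
    nlinarith [h4, h5]
  nlinarith [h1, h2]

set_option maxHeartbeats 2000000 in
/-- Theorem 2, estimate (4.19)+(4.20): the accelerated primal scheme for
1-strongly convex `g`, with `λ‖A‖² ≤ 1`, `τ₀ = 1`, `τ_{k+1} = τ_k/√(1+τ_k)`,
`σ_k = λ/τ_k`, `Σ_k = σ₀+⋯+σ_k` (here `Sig k = Σ_{k−1}`, `Sig 0 = 0`), satisfies
`(σ_k/(2τ_k))‖x^k − x̄‖² + Σ_{k−1}(F_k(s^k) − g_*) + Σᵢ σᵢ²(f(xⁱ) − f_*)
  ≤ (σ₀/(2τ₀))‖x⁰ − x̄‖²`, where `F_k(x) = g(x) + Σ_{k−1}(f(x) − f_*)`;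
in particular `F_k(s^k) − g_* ≤ 3‖x⁰ − x̄‖²/((k+3)k)`. -/
theorem stmt16 (n m : ℕ)
    (A : EuclideanSpace ℝ (Fin n) →L[ℝ] EuclideanSpace ℝ (Fin m))
    (b : EuclideanSpace ℝ (Fin m))
    (g : EuclideanSpace ℝ (Fin n) → ℝ)
    (hglsc : LowerSemicontinuous g)
    (hgstrong : ConvexOn ℝ Set.univ (fun x => g x - (1/2) * ‖x‖ ^ 2))
    (f : EuclideanSpace ℝ (Fin n) → ℝ)
    (hf : ∀ x, f x = (1/2) * ‖A x - b‖ ^ 2)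
    (lam : ℝ) (hlam : 0 < lam) (hstep : lam * ‖A‖ ^ 2 ≤ 1)
    (τ σ Sig : ℕ → ℝ) (hτ0 : τ 0 = 1)
    (hτrec : ∀ k : ℕ, τ (k+1) = τ k / Real.sqrt (1 + τ k))
    (hσ : ∀ k : ℕ, σ k = lam / τ k)
    (hSig : ∀ k : ℕ, Sig k = ∑ i ∈ Finset.range k, σ i)
    (x s z : ℕ → EuclideanSpace ℝ (Fin n))
    (hs0 : s 0 = x 0)
    (hz : ∀ k : ℕ, z k = (Sig (k+1))⁻¹ • (σ k • x k + Sig k • s k))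
    (hprox : ∀ k : ℕ, ∀ y,
      τ k * g (x (k+1)) + (1/2) * ‖x (k+1) -
        (x k - (τ k * Sig (k+1)) • (ContinuousLinearMap.adjoint A (A (z k) - b)))‖ ^ 2
      ≤ τ k * g y + (1/2) * ‖y -
        (x k - (τ k * Sig (k+1)) • (ContinuousLinearMap.adjoint A (A (z k) - b)))‖ ^ 2)
    (hsrec : ∀ k : ℕ, s (k+1) = (Sig (k+1))⁻¹ • (σ k • x (k+1) + Sig k • s k))
    (xbar : EuclideanSpace ℝ (Fin n))
    (hxbar_f : ∀ y, f xbar ≤ f y)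
    (hxbar_g : ∀ y, (∀ w, f y ≤ f w) → g xbar ≤ g y) :
    (∀ k : ℕ,
      (σ k / (2 * τ k)) * ‖x k - xbar‖ ^ 2
        + Sig k * ((g (s k) + Sig k * (f (s k) - f xbar)) - g xbar)
        + ∑ i ∈ Finset.range k, (σ i) ^ 2 * (f (x i) - f xbar)
      ≤ (σ 0 / (2 * τ 0)) * ‖x 0 - xbar‖ ^ 2)
    ∧ (∀ k : ℕ, 1 ≤ k →
      (g (s k) + Sig k * (f (s k) - f xbar)) - g xbar
        ≤ 3 * ‖x 0 - xbar‖ ^ 2 / (((k : ℝ) + 3) * (k : ℝ))) := by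
  -- basic positivity facts
  have hτpos : ∀ k, 0 < τ k := by
    intro k
    induction k with
    | zero => rw [hτ0]; norm_num
    | succ k ih =>
      rw [hτrec]
      exact div_pos ih (Real.sqrt_pos.2 (by linarith))
  have hτsq : ∀ k, τ (k+1)^2 = τ k^2 / (1 + τ k) := by
    intro k
    rw [hτrec, div_pow, Real.sq_sqrt (by linarith [hτpos k] : (0:ℝ) ≤ 1 + τ k)]
  have hσpos : ∀ k, 0 < σ k := fun k => (hσ k) ▸ div_pos hlam (hτpos k)
  have hSnn : ∀ k, 0 ≤ Sig k := by
    intro k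
    rw [hSig]
    exact Finset.sum_nonneg fun i _ => (hσpos i).le
  have hS1 : ∀ k, Sig (k+1) = Sig k + σ k := by
    intro k
    rw [hSig, hSig, Finset.sum_range_succ]
  have hS1pos : ∀ k, 0 < Sig k + σ k := fun k => add_pos_of_nonneg_of_pos (hSnn k) (hσpos k)
  -- convexity of g
  have hgconv : ConvexOn ℝ (Set.univ : Set (EuclideanSpace ℝ (Fin n))) g := by
    have h2 : g = fun v => (g v - (1/2) * ‖v‖^2) + (1/2)*‖v‖^2 := by
      funext v; ring
    rw [h2]
    exact hgstrong.add (halfsq_convex (E := EuclideanSpace ℝ (Fin n)))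
  -- exact expansion of f
  have hfexp : ∀ p q : EuclideanSpace ℝ (Fin n),
      f p - f q = ⟪A q - b, A p - A q⟫ + (1/2)*‖A p - A q‖^2 := by
    intro p q
    rw [hf, hf]
    have h : A p - b = (A q - b) + (A p - A q) := by abel
    rw [h, norm_add_sq_real]
    ring
  -- optimality of xbar : A* (A xbar - b) = 0
  have hc : (ContinuousLinearMap.adjoint A) (A xbar - b) = 0 := by
    set c := (ContinuousLinearMap.adjoint A) (A xbar - b) with hcdef
    have hkey : ∀ t : ℝ, 0 < t → t * ‖c‖^2 ≤ t^2/2 * ‖A c‖^2 := by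
      intro t ht
      have h := hxbar_f (xbar - t • c)
      have he := hfexp (xbar - t • c) xbar
      have hAv : A (xbar - t • c) - A xbar = (-t) • (A c) := by
        rw [map_sub, map_smul]; module
      rw [hAv] at he
      have h1 : ⟪A xbar - b, (-t) • (A c)⟫ = -t * ‖c‖^2 := by
        rw [real_inner_smul_right, ← ContinuousLinearMap.adjoint_inner_left,
          real_inner_self_eq_norm_sq]
      have h2 : ‖(-t) • (A c)‖^2 = t^2 * ‖A c‖^2 := by
        rw [norm_smul, Real.norm_eq_abs, mul_pow, sq_abs]; ring
      rw [h1, h2] at he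
      nlinarith [h, he]
    have hle : ‖c‖^2 ≤ 0 := by
      refine le_of_forall_pos_le_add ?_
      intro ε hε
      have hq : (0:ℝ) < ‖A c‖^2 + 1 := by positivity
      set t : ℝ := 2*ε/(‖A c‖^2 + 1) with htdef
      have ht : 0 < t := by positivity
      have h1 := hkey t ht
      have h2 : ‖c‖^2 ≤ t/2 * ‖A c‖^2 := by
        have := le_of_mul_le_mul_left (by nlinarith [h1] : t * ‖c‖^2 ≤ t * (t/2 * ‖A c‖^2)) ht
        linarith
      have h3 : t/2 * ‖A c‖^2 ≤ ε := by
        rw [htdef]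
        have he : 2*ε/(‖A c‖^2+1)/2*‖A c‖^2 = ε*‖A c‖^2/(‖A c‖^2+1) := by
          field_simp
        rw [he, div_le_iff₀ hq]
        nlinarith [hε.le, (by positivity : (0:ℝ) ≤ ‖A c‖^2)]
      linarith
    have : ‖c‖ = 0 := by
      have h0 : ‖c‖^2 = 0 := le_antisymm hle (by positivity)
      nlinarith [norm_nonneg c, h0]
    exact norm_eq_zero.1 this
  have horth : ∀ v : EuclideanSpace ℝ (Fin n), ⟪A xbar - b, A v⟫ = 0 := by
    intro v
    rw [← ContinuousLinearMap.adjoint_inner_left, hc, inner_zero_left]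
  -- acceleration identity
  have haccel : ∀ k, σ (k+1) / (2 * τ (k+1)) = (σ k / (2 * τ k)) * (1 + τ k) := by
    intro k
    have h1 := hτsq k
    have h2 : (0:ℝ) < 1 + τ k := by linarith [hτpos k]
    have h3 : τ (k+1)^2 * (1+τ k) = τ k^2 := by rw [hτsq]; field_simp
    rw [hσ, hσ, div_div, div_div, div_mul_eq_mul_div,
      div_eq_div_iff (mul_pos (hτpos (k+1)) (by linarith [hτpos (k+1)] : (0:ℝ) < 2 * τ (k+1))).ne'
        (mul_pos (hτpos k) (by linarith [hτpos k] : (0:ℝ) < 2 * τ k)).ne']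
    linear_combination -2*lam*h3
  -- one-step energy decrease
  have hEstep : ∀ k : ℕ,
      (σ (k+1) / (2 * τ (k+1))) * ‖x (k+1) - xbar‖ ^ 2
        + Sig (k+1) * ((g (s (k+1)) + Sig (k+1) * (f (s (k+1)) - f xbar)) - g xbar)
        + σ k ^ 2 * (f (x k) - f xbar)
      ≤ (σ k / (2 * τ k)) * ‖x k - xbar‖ ^ 2
        + Sig k * ((g (s k) + Sig k * (f (s k) - f xbar)) - g xbar) := by
    intro k
    have hτk := hτpos k
    have hσk := hσpos k
    have hSk := hSnn k
    have hS1k := hS1pos k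
    have hS1ne : Sig k + σ k ≠ 0 := (hS1pos k).ne'
    set D : EuclideanSpace ℝ (Fin m) := A (z k) - b with hD
    set dv : EuclideanSpace ℝ (Fin n) := (ContinuousLinearMap.adjoint A) D with hdv
    -- basic vector identities
    have hzv : (Sig k + σ k) • z k = σ k • x k + Sig k • s k := by
      rw [hz k, hS1 k, smul_smul, mul_inv_cancel₀ hS1ne, one_smul]
    have hsv : (Sig k + σ k) • s (k+1) = σ k • x (k+1) + Sig k • s k := by
      rw [hsrec k, hS1 k, smul_smul, mul_inv_cancel₀ hS1ne, one_smul]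
    have hv1 : (Sig k + σ k) • (A (s (k+1)) - A (z k)) = σ k • (A (x (k+1)) - A (x k)) := by
      have h : (Sig k + σ k) • (s (k+1) - z k) = σ k • (x (k+1) - x k) := by
        rw [smul_sub, hzv, hsv]; module
      calc (Sig k + σ k) • (A (s (k+1)) - A (z k))
          = A ((Sig k + σ k) • (s (k+1) - z k)) := by rw [map_smul, map_sub]
        _ = A (σ k • (x (k+1) - x k)) := by rw [h]
        _ = σ k • (A (x (k+1)) - A (x k)) := by rw [map_smul, map_sub]
    have hv2 : (Sig k + σ k) • (A (s k) - A (z k)) = σ k • (A (s k) - A (x k)) := by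
      have h : (Sig k + σ k) • (s k - z k) = σ k • (s k - x k) := by
        rw [smul_sub, hzv]; module
      calc (Sig k + σ k) • (A (s k) - A (z k))
          = A ((Sig k + σ k) • (s k - z k)) := by rw [map_smul, map_sub]
        _ = A (σ k • (s k - x k)) := by rw [h]
        _ = σ k • (A (s k) - A (x k)) := by rw [map_smul, map_sub]
    have hv3 : (Sig k + σ k) • (A (x k) - A (z k)) = Sig k • (A (x k) - A (s k)) := by
      have h : (Sig k + σ k) • (x k - z k) = Sig k • (x k - s k) := by
        rw [smul_sub, hzv]; module
      calc (Sig k + σ k) • (A (x k) - A (z k))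
          = A ((Sig k + σ k) • (x k - z k)) := by rw [map_smul, map_sub]
        _ = A (Sig k • (x k - s k)) := by rw [h]
        _ = Sig k • (A (x k) - A (s k)) := by rw [map_smul, map_sub]
    -- scalar consequences
    have hi1 : (Sig k + σ k) * ⟪D, A (s (k+1)) - A (z k)⟫
        = σ k * ⟪D, A (x (k+1)) - A (x k)⟫ := by
      rw [← real_inner_smul_right, hv1, real_inner_smul_right]
    have hi2 : (Sig k + σ k) * ⟪D, A (s k) - A (z k)⟫
        = σ k * ⟪D, A (s k) - A (x k)⟫ := by
      rw [← real_inner_smul_right, hv2, real_inner_smul_right]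
    have hi3 : (Sig k + σ k) * ⟪D, A (x k) - A (z k)⟫
        = Sig k * ⟪D, A (x k) - A (s k)⟫ := by
      rw [← real_inner_smul_right, hv3, real_inner_smul_right]
    have hn1 : (Sig k + σ k)^2 * ‖A (s (k+1)) - A (z k)‖^2
        = σ k^2 * ‖A (x (k+1)) - A (x k)‖^2 := by
      have h := congrArg (fun v : EuclideanSpace ℝ (Fin m) => ‖v‖^2) hv1
      simpa [norm_smul, mul_pow, Real.norm_eq_abs, sq_abs] using h
    have hn2 : (Sig k + σ k)^2 * ‖A (s k) - A (z k)‖^2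
        = σ k^2 * ‖A (s k) - A (x k)‖^2 := by
      have h := congrArg (fun v : EuclideanSpace ℝ (Fin m) => ‖v‖^2) hv2
      simpa [norm_smul, mul_pow, Real.norm_eq_abs, sq_abs] using h
    have hn3 : (Sig k + σ k)^2 * ‖A (x k) - A (z k)‖^2
        = Sig k^2 * ‖A (x k) - A (s k)‖^2 := by
      have h := congrArg (fun v : EuclideanSpace ℝ (Fin m) => ‖v‖^2) hv3
      simpa [norm_smul, mul_pow, Real.norm_eq_abs, sq_abs] using h
    -- flips
    have hswap : ⟪D, A (x k) - A (s k)⟫ = -⟪D, A (s k) - A (x k)⟫ := by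
      rw [inner_sub_right, inner_sub_right]; ring
    have hnswap : ‖A (x k) - A (s k)‖^2 = ‖A (s k) - A (x k)‖^2 := by
      rw [norm_sub_rev]
    -- orthogonality at the optimum
    have hDz : ⟪D, A xbar - A (z k)⟫ = -‖A xbar - A (z k)‖^2 := by
      have h0 : ⟪A xbar - b, A xbar - A (z k)⟫ = 0 := by
        rw [← map_sub]; exact horth _
      have h : D = (A xbar - b) - (A xbar - A (z k)) := by rw [hD]; abel
      rw [h, inner_sub_left, h0, real_inner_self_eq_norm_sq]; ring
    -- f expansions
    have hf1 := hfexp (s (k+1)) (z k)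
    have hf2 := hfexp (s k) (z k)
    have hf3 := hfexp (x k) (z k)
    have hf4 := hfexp xbar (z k)
    have hfz : f xbar - f (z k) = -(1/2) * ‖A xbar - A (z k)‖^2 := by
      rw [hf4, hDz]; ring
    -- multiplied expansions
    have hd1 : (Sig k + σ k)^2 * (f (s (k+1)) - f xbar)
        = σ k * (Sig k + σ k) * ⟪D, A (x (k+1)) - A (x k)⟫
          + σ k^2 * ‖A (x (k+1)) - A (x k)‖^2 / 2
          + (Sig k + σ k)^2 * ‖A xbar - A (z k)‖^2 / 2 := by
      linear_combination (Sig k + σ k)^2 * hf1 - (Sig k + σ k)^2 * hfz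
        + (Sig k + σ k) * hi1 + (1/2) * hn1
    have hd2 : (Sig k + σ k)^2 * (f (s k) - f xbar)
        = σ k * (Sig k + σ k) * ⟪D, A (s k) - A (x k)⟫
          + σ k^2 * ‖A (s k) - A (x k)‖^2 / 2
          + (Sig k + σ k)^2 * ‖A xbar - A (z k)‖^2 / 2 := by
      linear_combination (Sig k + σ k)^2 * hf2 - (Sig k + σ k)^2 * hfz
        + (Sig k + σ k) * hi2 + (1/2) * hn2
    have hd3 : (Sig k + σ k)^2 * (f (x k) - f xbar)
        = -((Sig k + σ k) * Sig k * ⟪D, A (s k) - A (x k)⟫)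
          + Sig k^2 * ‖A (s k) - A (x k)‖^2 / 2
          + (Sig k + σ k)^2 * ‖A xbar - A (z k)‖^2 / 2 := by
      linear_combination (Sig k + σ k)^2 * hf3 - (Sig k + σ k)^2 * hfz
        + (Sig k + σ k) * hi3 + (1/2) * hn3 + (Sig k + σ k) * Sig k * hswap + (1/2) * Sig k^2 * hnswap
    have hr7 : (Sig k + σ k) * ⟪D, A xbar - A (x k)⟫
        = -((Sig k + σ k) * ‖A xbar - A (z k)‖^2) + Sig k * ⟪D, A (s k) - A (x k)⟫ := by
      have hsplit : ⟪D, A xbar - A (x k)⟫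
          = ⟪D, A xbar - A (z k)⟫ + ⟪D, A (x k) - A (z k)⟫ - 2*⟪D, A (x k) - A (z k)⟫ := by
        rw [inner_sub_right, inner_sub_right, inner_sub_right]; ring
      linear_combination (Sig k + σ k) * hsplit + (Sig k + σ k) * hDz - hi3 - Sig k * hswap
    -- the key algebraic identity
    have hS : (Sig k + σ k)^2 * (f (s (k+1)) - f xbar) + σ k^2 * (f (x k) - f xbar)
        - Sig k^2 * (f (s k) - f xbar)
        - σ k * (Sig k + σ k) * ⟪D, A (x (k+1)) - A (x k)⟫
        + σ k * (Sig k + σ k) * ⟪D, A xbar - A (x k)⟫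
        = σ k^2 * ‖A (x (k+1)) - A (x k)‖^2 / 2 := by
      have hexp : (Sig k + σ k)^2 * ((Sig k + σ k)^2 * (f (s (k+1)) - f xbar)
            + σ k^2 * (f (x k) - f xbar) - Sig k^2 * (f (s k) - f xbar)
            - σ k * (Sig k + σ k) * ⟪D, A (x (k+1)) - A (x k)⟫
            + σ k * (Sig k + σ k) * ⟪D, A xbar - A (x k)⟫)
          = (Sig k + σ k)^2 * (σ k^2 * ‖A (x (k+1)) - A (x k)‖^2 / 2) := by
        linear_combination (Sig k + σ k)^2 * hd1 + σ k^2 * hd3 - Sig k^2 * hd2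
          + σ k * (Sig k + σ k)^2 * hr7
      exact mul_left_cancel₀ (pow_ne_zero 2 hS1ne) hexp
    -- strong prox inequality at xbar
    have hps := prox_strong g hgstrong (τ k) hτk
      (x k - (τ k * Sig (k+1)) • dv) (x (k+1)) (hprox k) xbar
    have hvecw1 : x (k+1) - (x k - (τ k * Sig (k+1)) • dv)
        = (x (k+1) - x k) + (τ k * Sig (k+1)) • dv := by module
    have hvecw2 : xbar - (x k - (τ k * Sig (k+1)) • dv)
        = (xbar - x k) + (τ k * Sig (k+1)) • dv := by module
    have hinner1 : ⟪x (k+1) - x k, (τ k * Sig (k+1)) • dv⟫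
        = (τ k * (Sig k + σ k)) * ⟪D, A (x (k+1)) - A (x k)⟫ := by
      rw [real_inner_smul_right, real_inner_comm, hdv,
        ContinuousLinearMap.adjoint_inner_left, map_sub, hS1]
    have hinner2 : ⟪xbar - x k, (τ k * Sig (k+1)) • dv⟫
        = (τ k * (Sig k + σ k)) * ⟪D, A xbar - A (x k)⟫ := by
      rw [real_inner_smul_right, real_inner_comm, hdv,
        ContinuousLinearMap.adjoint_inner_left, map_sub, hS1]
    have hw1 : ‖x (k+1) - (x k - (τ k * Sig (k+1)) • dv)‖^2
        = ‖x (k+1) - x k‖^2 + 2*((τ k * (Sig k + σ k)) * ⟪D, A (x (k+1)) - A (x k)⟫)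
          + (τ k * Sig (k+1))^2 * ‖dv‖^2 := by
      rw [hvecw1, norm_add_sq_real, hinner1, norm_smul, Real.norm_eq_abs, mul_pow, sq_abs]
    have hw2 : ‖xbar - (x k - (τ k * Sig (k+1)) • dv)‖^2
        = ‖xbar - x k‖^2 + 2*((τ k * (Sig k + σ k)) * ⟪D, A xbar - A (x k)⟫)
          + (τ k * Sig (k+1))^2 * ‖dv‖^2 := by
      rw [hvecw2, norm_add_sq_real, hinner2, norm_smul, Real.norm_eq_abs, mul_pow, sq_abs]
    have hC : τ k * g (x (k+1)) + (1/2)*‖x (k+1) - x k‖^2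
        + τ k * (Sig k + σ k) * ⟪D, A (x (k+1)) - A (x k)⟫
        + ((1 + τ k)/2) * ‖xbar - x (k+1)‖^2
        ≤ τ k * g xbar + (1/2)*‖xbar - x k‖^2
          + τ k * (Sig k + σ k) * ⟪D, A xbar - A (x k)⟫ := by
      rw [hw1, hw2] at hps
      linarith [hps]
    have hC' : σ k * g (x (k+1)) + (σ k/(2*τ k))*‖x (k+1) - x k‖^2
        + σ k * (Sig k + σ k) * ⟪D, A (x (k+1)) - A (x k)⟫
        + ((σ k/(2*τ k))*(1 + τ k)) * ‖xbar - x (k+1)‖^2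
        ≤ σ k * g xbar + (σ k/(2*τ k))*‖xbar - x k‖^2
          + σ k * (Sig k + σ k) * ⟪D, A xbar - A (x k)⟫ := by
      have hpos : (0:ℝ) ≤ σ k / τ k := (div_pos hσk hτk).le
      calc σ k * g (x (k+1)) + (σ k/(2*τ k))*‖x (k+1) - x k‖^2
            + σ k * (Sig k + σ k) * ⟪D, A (x (k+1)) - A (x k)⟫
            + ((σ k/(2*τ k))*(1 + τ k)) * ‖xbar - x (k+1)‖^2
          = (σ k / τ k) * (τ k * g (x (k+1)) + (1/2)*‖x (k+1) - x k‖^2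
            + τ k * (Sig k + σ k) * ⟪D, A (x (k+1)) - A (x k)⟫
            + ((1 + τ k)/2) * ‖xbar - x (k+1)‖^2) := by
            field_simp
        _ ≤ (σ k / τ k) * (τ k * g xbar + (1/2)*‖xbar - x k‖^2
            + τ k * (Sig k + σ k) * ⟪D, A xbar - A (x k)⟫) :=
            mul_le_mul_of_nonneg_left hC hpos
        _ = σ k * g xbar + (σ k/(2*τ k))*‖xbar - x k‖^2
            + σ k * (Sig k + σ k) * ⟪D, A xbar - A (x k)⟫ := by
            field_simp
    -- convexity of g along the s-update
    have hcomb : (σ k/(Sig k + σ k)) • x (k+1) + (Sig k/(Sig k + σ k)) • s k = s (k+1) := by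
      have h := congrArg (fun v : EuclideanSpace ℝ (Fin n) => (Sig k + σ k)⁻¹ • v) hsv
      simp only [smul_smul, inv_mul_cancel₀ hS1ne, one_smul] at h
      rw [div_eq_inv_mul, div_eq_inv_mul, h, smul_add, smul_smul, smul_smul]
    have hgc := hgconv.2 (Set.mem_univ (x (k+1))) (Set.mem_univ (s k))
      (div_nonneg hσk.le hS1k.le) (div_nonneg hSk hS1k.le)
      (by rw [← add_div, add_comm (σ k) (Sig k)]; exact div_self hS1ne : σ k/(Sig k + σ k) + Sig k/(Sig k + σ k) = 1)
    simp only [smul_eq_mul] at hgc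
    rw [hcomb] at hgc
    have hB' : (Sig k + σ k) * g (s (k+1)) ≤ σ k * g (x (k+1)) + Sig k * g (s k) := by
      calc (Sig k + σ k) * g (s (k+1))
          ≤ (Sig k + σ k) * (σ k/(Sig k + σ k) * g (x (k+1)) + Sig k/(Sig k + σ k) * g (s k)) :=
            mul_le_mul_of_nonneg_left hgc hS1k.le
        _ = σ k * g (x (k+1)) + Sig k * g (s k) := by field_simp
    -- step bound from lam * ‖A‖^2 ≤ 1
    have hlamk : τ k * σ k * ‖A‖^2 ≤ 1 := by
      have h : τ k * (lam / τ k) * ‖A‖^2 = lam * ‖A‖^2 := by field_simp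
      rw [hσ, h]; exact hstep
    have hop : ‖A (x (k+1)) - A (x k)‖^2 ≤ ‖A‖^2 * ‖x (k+1) - x k‖^2 := by
      have h := A.le_opNorm (x (k+1) - x k)
      rw [map_sub] at h
      have h2 := pow_le_pow_left₀ (norm_nonneg _) h 2
      rw [mul_pow] at h2
      exact h2
    have hquad : σ k^2 * ‖A (x (k+1)) - A (x k)‖^2 / 2
        ≤ (σ k/(2*τ k)) * ‖x (k+1) - x k‖^2 := by
      have h1 := mul_le_mul_of_nonneg_left hop (mul_nonneg hτk.le hσk.le)
      have h3 : (τ k * σ k * ‖A‖^2) * ‖x (k+1) - x k‖^2 ≤ 1 * ‖x (k+1) - x k‖^2 :=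
        mul_le_mul_of_nonneg_right hlamk (by positivity)
      have h4 : τ k * σ k * ‖A (x (k+1)) - A (x k)‖^2 ≤ ‖x (k+1) - x k‖^2 := by linarith only [h1, h3]
      calc σ k^2 * ‖A (x (k+1)) - A (x k)‖^2 / 2
          = (σ k/(2*τ k)) * (τ k * σ k * ‖A (x (k+1)) - A (x k)‖^2) := by field_simp
        _ ≤ (σ k/(2*τ k)) * ‖x (k+1) - x k‖^2 :=
            mul_le_mul_of_nonneg_left h4 (by positivity)
    -- assemble
    have hnx1 : ‖x (k+1) - xbar‖^2 = ‖xbar - x (k+1)‖^2 := by rw [norm_sub_rev]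
    have hnx0 : ‖x k - xbar‖^2 = ‖xbar - x k‖^2 := by rw [norm_sub_rev]
    rw [haccel k, hS1 k, hnx1, hnx0]
    linarith only [hB', hC', hS, hquad]
  -- part 1: the energy estimate
  have hmain : ∀ k : ℕ,
      (σ k / (2 * τ k)) * ‖x k - xbar‖ ^ 2
        + Sig k * ((g (s k) + Sig k * (f (s k) - f xbar)) - g xbar)
        + ∑ i ∈ Finset.range k, (σ i) ^ 2 * (f (x i) - f xbar)
      ≤ (σ 0 / (2 * τ 0)) * ‖x 0 - xbar‖ ^ 2 := by
    intro k
    induction k with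
    | zero =>
      have h0 : Sig 0 = 0 := by rw [hSig]; simp
      rw [h0]; simp
    | succ k ih =>
      have hst := hEstep k
      rw [Finset.sum_range_succ]
      linarith only [hst, ih]
  refine ⟨hmain, ?_⟩
  -- part 2: the O(1/k^2) rate
  -- upper bound on τ
  have hτub : ∀ k : ℕ, τ k * ((k:ℝ) + 3) ≤ 3 := by
    intro k
    induction k with
    | zero => rw [hτ0]; norm_num
    | succ k ih =>
      have ht := hτpos k
      have ha := hτpos (k+1)
      have hK : (0:ℝ) ≤ (k:ℝ) := Nat.cast_nonneg k
      have ha2 : τ (k+1)^2 * (1 + τ k) = τ k^2 := by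
        rw [hτsq]; field_simp
      have ht1 : τ k ≤ 1 := by nlinarith only [ih, hK, ht, mul_nonneg ht.le hK]
      have h7 : τ k * (2*(k:ℝ) + 7) ≤ 7 := by nlinarith only [ih, ht1]
      have hsq : (τ k * ((k:ℝ)+3))^2 ≤ 9 := by
        nlinarith only [ih, mul_nonneg ht.le (by linarith : (0:ℝ) ≤ (k:ℝ)+3)]
      have hmain2 : τ k^2 * ((k:ℝ)+4)^2 ≤ 9*(1 + τ k) := by
        nlinarith only [hsq, mul_le_mul_of_nonneg_left h7 ht.le, ht]
      have he : τ (k+1)^2 * ((k:ℝ)+4)^2 * (1 + τ k) = τ k^2 * ((k:ℝ)+4)^2 := by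
        linear_combination ((k:ℝ)+4)^2 * ha2
      have h9 : τ (k+1)^2 * ((k:ℝ)+4)^2 * (1 + τ k) ≤ 9 * (1 + τ k) := by
        linarith only [hmain2, he]
      have h10 : τ (k+1)^2 * ((k:ℝ)+4)^2 ≤ 9 :=
        le_of_mul_le_mul_right (by linarith only [h9]) (by linarith : (0:ℝ) < 1 + τ k)
      have hp : 0 ≤ τ (k+1) * ((k:ℝ)+4) := by positivity
      have : τ (k+1) * ((k:ℝ)+4) ≤ 3 := by nlinarith only [h10, hp]
      push_cast
      linarith only [this]
  -- lower bound on σ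
  have hσlb : ∀ i : ℕ, lam * ((i:ℝ) + 3) / 3 ≤ σ i := by
    intro i
    rw [hσ, le_div_iff₀ (hτpos i)]
    have h := mul_le_mul_of_nonneg_left (hτub i) (by positivity : (0:ℝ) ≤ lam/3)
    linarith only [h, hlam]
  -- lower bound on Sig
  have hSlb : ∀ k : ℕ, lam * ((k:ℝ) * ((k:ℝ) + 3)) / 6 ≤ Sig k := by
    intro k
    have h1 : ∑ i ∈ Finset.range k, lam * ((i:ℝ) + 3) / 3 ≤ Sig k := by
      rw [hSig]
      exact Finset.sum_le_sum fun i _ => hσlb i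
    have h3 : ∀ N : ℕ, ∑ i ∈ Finset.range N, ((i:ℝ) + 3) = (N:ℝ)*((N:ℝ)-1)/2 + 3*(N:ℝ) := by
      intro N
      induction N with
      | zero => simp
      | succ N ih =>
        rw [Finset.sum_range_succ, ih]
        push_cast
        ring
    have h2 : ∑ i ∈ Finset.range k, lam * ((i:ℝ) + 3) / 3
        = lam * ((k:ℝ)*((k:ℝ)-1)/2 + 3*(k:ℝ)) / 3 := by
      rw [← Finset.sum_div, ← Finset.mul_sum, h3]
    rw [h2] at h1
    have hK : (0:ℝ) ≤ (k:ℝ) := Nat.cast_nonneg k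
    nlinarith only [h1, mul_nonneg hlam.le hK]
  -- conclude
  intro k hk
  have hK1 : (1:ℝ) ≤ (k:ℝ) := by exact_mod_cast hk
  have hKpos : (0:ℝ) < ((k:ℝ) + 3) * (k:ℝ) := by nlinarith only [hK1]
  have hE := hmain k
  have hfirst : 0 ≤ (σ k / (2 * τ k)) * ‖x k - xbar‖ ^ 2 :=
    mul_nonneg (div_nonneg (hσpos k).le (by linarith [hτpos k])) (by positivity)
  have hsum : 0 ≤ ∑ i ∈ Finset.range k, (σ i) ^ 2 * (f (x i) - f xbar) :=
    Finset.sum_nonneg fun i _ => mul_nonneg (sq_nonneg _) (by linarith [hxbar_f (x i)])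
  have hbase : σ 0 / (2 * τ 0) = lam / 2 := by
    rw [hσ, hτ0]
    norm_num
  have hgb : Sig k * ((g (s k) + Sig k * (f (s k) - f xbar)) - g xbar)
      ≤ lam / 2 * ‖x 0 - xbar‖ ^ 2 := by
    rw [hbase] at hE
    linarith only [hE, hfirst, hsum]
  rw [le_div_iff₀ hKpos]
  by_cases hFn : (g (s k) + Sig k * (f (s k) - f xbar)) - g xbar ≤ 0
  · have h := mul_nonpos_of_nonpos_of_nonneg hFn hKpos.le
    have h2 : (0:ℝ) ≤ 3 * ‖x 0 - xbar‖ ^ 2 := by positivity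
    linarith only [h, h2]
  · push_neg at hFn
    have h1 := mul_le_mul_of_nonneg_right (hSlb k) hFn.le
    have h2 : lam * (((k:ℝ) * ((k:ℝ) + 3)) / 6 * ((g (s k) + Sig k * (f (s k) - f xbar)) - g xbar))
        ≤ lam * (‖x 0 - xbar‖ ^ 2 / 2) := by
      nlinarith only [h1, hgb]
    have h3 := le_of_mul_le_mul_left h2 hlam
    nlinarith only [h3]
end

section
/- Under the accelerated scheme with strong duality (constant D_y), the iterates satisfy Σ_{k−1}√(f(s^k) − f_*) ≤ (D_y + √(D_y² + λ D_x²))/√2 where D_x = ‖x^0 − x̄‖; consequently f(s^k) − f_* = O(1/k⁴) and ‖x^k − x̄‖² ≤ (D_x² + D_y²/λ)·9/(k+2)², i.e., ‖x^k − x̄‖ = O(1/k). -/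
open RealInnerProductSpace

lemma combo_norm_sq {E : Type*} [NormedAddCommGroup E] [InnerProductSpace ℝ E] (u w : E) (p q : ℝ)
    (h : p + q = 1) :
    ‖p • u + q • w‖^2 = p*‖u‖^2 + q*‖w‖^2 - p*q*‖u-w‖^2 := by
  have e1 : ‖p • u‖^2 = p^2*‖u‖^2 := by
    rw [norm_smul, Real.norm_eq_abs, mul_pow, sq_abs]
  have e2 : ‖q • w‖^2 = q^2*‖w‖^2 := by
    rw [norm_smul, Real.norm_eq_abs, mul_pow, sq_abs]
  have e3 : ⟪p • u, q • w⟫ = p*q*⟪u, w⟫ := by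
    rw [real_inner_smul_left, real_inner_smul_right]; ring
  rw [norm_add_sq_real, e1, e2, e3, norm_sub_sq_real]
  linear_combination (p*‖u‖^2 + q*‖w‖^2) * h

set_option maxHeartbeats 2000000 in
/-- Theorem 2 (ii): under the accelerated primal scheme with strong duality
(`u*` with `−AᵀAu*` a subgradient of `g` at `x̄`, `D_y = ‖Au*‖`,
`D_x = ‖x⁰ − x̄‖`), one has
`Σ_{k−1}√(f(s^k) − f_*) ≤ (D_y + √(D_y² + λD_x²))/√2`; consequently
`f(s^k) − f_* = O(1/k⁴)` and `‖x^k − x̄‖² ≤ (D_x² + D_y²/λ)·9/(k+2)²`. -/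
theorem stmt17 (n m : ℕ)
    (A : EuclideanSpace ℝ (Fin n) →L[ℝ] EuclideanSpace ℝ (Fin m))
    (b : EuclideanSpace ℝ (Fin m))
    (g : EuclideanSpace ℝ (Fin n) → ℝ)
    (hglsc : LowerSemicontinuous g)
    (hgstrong : ConvexOn ℝ Set.univ (fun x => g x - (1/2) * ‖x‖ ^ 2))
    (f : EuclideanSpace ℝ (Fin n) → ℝ)
    (hf : ∀ x, f x = (1/2) * ‖A x - b‖ ^ 2)
    (lam : ℝ) (hlam : 0 < lam) (hstep : lam * ‖A‖ ^ 2 ≤ 1)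
    (τ σ Sig : ℕ → ℝ) (hτ0 : τ 0 = 1)
    (hτrec : ∀ k : ℕ, τ (k+1) = τ k / Real.sqrt (1 + τ k))
    (hσ : ∀ k : ℕ, σ k = lam / τ k)
    (hSig : ∀ k : ℕ, Sig k = ∑ i ∈ Finset.range k, σ i)
    (x s z : ℕ → EuclideanSpace ℝ (Fin n))
    (hs0 : s 0 = x 0)
    (hz : ∀ k : ℕ, z k = (Sig (k+1))⁻¹ • (σ k • x k + Sig k • s k))
    (hprox : ∀ k : ℕ, ∀ y,
      τ k * g (x (k+1)) + (1/2) * ‖x (k+1) -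
        (x k - (τ k * Sig (k+1)) • (ContinuousLinearMap.adjoint A (A (z k) - b)))‖ ^ 2
      ≤ τ k * g y + (1/2) * ‖y -
        (x k - (τ k * Sig (k+1)) • (ContinuousLinearMap.adjoint A (A (z k) - b)))‖ ^ 2)
    (hsrec : ∀ k : ℕ, s (k+1) = (Sig (k+1))⁻¹ • (σ k • x (k+1) + Sig k • s k))
    (xbar : EuclideanSpace ℝ (Fin n))
    (hxbar_f : ∀ y, f xbar ≤ f y)
    (hxbar_g : ∀ y, (∀ w, f y ≤ f w) → g xbar ≤ g y)
    (ustar : EuclideanSpace ℝ (Fin n))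
    (hsubgrad : ∀ y, g y ≥ g xbar +
      (inner ℝ (-(ContinuousLinearMap.adjoint A (A ustar))) (y - xbar) : ℝ)) :
    (∀ k : ℕ, 1 ≤ k →
      Sig k * Real.sqrt (f (s k) - f xbar)
        ≤ (‖A ustar‖ + Real.sqrt (‖A ustar‖ ^ 2 + lam * ‖x 0 - xbar‖ ^ 2))
            / Real.sqrt 2)
    ∧ (∀ k : ℕ, 1 ≤ k →
      ‖x k - xbar‖ ^ 2
        ≤ (‖x 0 - xbar‖ ^ 2 + ‖A ustar‖ ^ 2 / lam) * (9 / ((k : ℝ) + 2) ^ 2))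
    ∧ (∃ C : ℝ, ∀ k : ℕ, 1 ≤ k → f (s k) - f xbar ≤ C / (k : ℝ) ^ 4) := by
  -- scalar sequence facts
  have hτpos : ∀ k, 0 < τ k := by
    intro k; induction k with
    | zero => rw [hτ0]; norm_num
    | succ k ih => rw [hτrec]; exact div_pos ih (Real.sqrt_pos.2 (by linarith))
  have hτne : ∀ k, τ k ≠ 0 := fun k => (hτpos k).ne'
  have hτsq : ∀ k, τ (k+1)^2 = τ k^2/(1+τ k) := by
    intro k; rw [hτrec, div_pow, Real.sq_sqrt (by linarith [hτpos k])]
  have hσpos : ∀ k, 0 < σ k := fun k => by rw [hσ]; exact div_pos hlam (hτpos k)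
  have hSnn : ∀ k, 0 ≤ Sig k := by
    intro k; rw [hSig]; exact Finset.sum_nonneg fun i _ => (hσpos i).le
  have hSl : ∀ k, 0 < Sig k + lam := fun k => by linarith [hSnn k]
  have hS1 : ∀ k, Sig (k+1) = Sig k + σ k := by
    intro k; rw [hSig, hSig, Finset.sum_range_succ]
  have hS'pos : ∀ k, 0 < Sig (k+1) := fun k => by rw [hS1]; linarith [hσpos k, hSnn k]
  have hlamS : ∀ k, (Sig k + lam)*(τ k)^2 = lam := by
    intro k; induction k with
    | zero =>
      have h0 : Sig 0 = 0 := by rw [hSig]; simp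
      rw [h0, hτ0]; ring
    | succ k ih =>
      rw [hS1, hτsq, hσ]
      have h1 : (0:ℝ) < 1 + τ k := by linarith [hτpos k]
      field_simp [hτne k]
      linear_combination ih
  have hσk : ∀ k, σ k = (Sig k + lam)*τ k := by
    intro k; rw [hσ, div_eq_iff (hτne k)]
    linear_combination -hlamS k
  have hS'P : ∀ k, Sig (k+1) = Sig k + (Sig k + lam)*τ k := by
    intro k; rw [hS1, hσk]
  have hτle : ∀ k : ℕ, τ k ≤ 3/((k:ℝ)+2) := by
    intro k; induction k with
    | zero => rw [hτ0]; norm_num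
    | succ k ih =>
      have hk2 : (0:ℝ) < (k:ℝ)+2 := by positivity
      have hk3 : (0:ℝ) < (k:ℝ)+3 := by positivity
      have ha : τ k * ((k:ℝ)+2) ≤ 3 := by
        rw [← le_div_iff₀ hk2]; exact ih
      have hτ3 : τ k ≤ 3 := by nlinarith [hτpos k]
      have hanneg : 0 ≤ τ k * ((k:ℝ)+2) := mul_nonneg (hτpos k).le hk2.le
      have hsqle : τ (k+1)^2 ≤ (3/((k:ℝ)+3))^2 := by
        rw [hτsq, div_pow, div_le_div_iff₀ (by linarith [hτpos k]) (by positivity)]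
        have h₁ : 0 ≤ (3 - τ k*((k:ℝ)+2))*(3 + τ k*((k:ℝ)+2)) :=
          mul_nonneg (by linarith) (by linarith)
        have h₂ : 0 ≤ τ k * (9 - 2*(τ k*((k:ℝ)+2)) - τ k) :=
          mul_nonneg (hτpos k).le (by linarith)
        nlinarith [h₁, h₂]
      have hp := hτpos (k+1)
      have hc : (0:ℝ) < 3/((k:ℝ)+3) := by positivity
      have hsum : (0:ℝ) < τ (k+1) + 3/((k:ℝ)+3) := by linarith
      have hfin : τ (k+1) ≤ 3/((k:ℝ)+3) := by nlinarith [hsqle, hsum]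
      have hcast : ((k+1:ℕ):ℝ)+2 = (k:ℝ)+3 := by push_cast; ring
      rw [hcast]; exact hfin
  -- facts about f
  have fexp : ∀ u w, f u = f w + ⟪A w - b, A (u - w)⟫ + (1/2)*‖A (u - w)‖^2 := by
    intro u w
    have h : A u - b = (A w - b) + A (u - w) := by rw [map_sub]; abel
    rw [hf, hf, h, norm_add_sq_real]; ring
  have horth : ∀ w, ⟪A xbar - b, A w⟫ = 0 := by
    intro w
    set r := ⟪A xbar - b, A w⟫ with hr
    set M := ‖A w‖^2 with hM
    have hMnn : 0 ≤ M := sq_nonneg _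
    have hq : ∀ t : ℝ, 0 ≤ t*r + t^2/2*M := by
      intro t
      have h1 := hxbar_f (xbar + t • w)
      have h2 := fexp (xbar + t • w) xbar
      have h3 : xbar + t • w - xbar = t • w := by abel
      rw [h3, map_smul, real_inner_smul_right, norm_smul, Real.norm_eq_abs, mul_pow, sq_abs] at h2
      rw [h2] at h1
      rw [← hr, ← hM] at h1
      nlinarith [h1]
    have hden : (0:ℝ) < M + 1 := by linarith
    have h := hq (-(r/(M+1)))
    have hform : -(r/(M+1))*r + (-(r/(M+1)))^2/2*M = -(r^2*(M+2))/(2*(M+1)^2) := by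
      field_simp; ring
    rw [hform] at h
    have h2 : r^2*(M+2) ≤ 0 := by
      rw [neg_div, le_neg, neg_zero] at h
      have := (div_le_iff₀ (by positivity : (0:ℝ) < 2*(M+1)^2)).1 h
      linarith
    have : r^2 = 0 := le_antisymm (by nlinarith) (sq_nonneg r)
    exact pow_eq_zero_iff two_ne_zero |>.mp this
  have hfdiff : ∀ u, f u - f xbar = (1/2)*‖A (u - xbar)‖^2 := by
    intro u
    have h := fexp u xbar
    rw [horth (u - xbar)] at h
    linarith
  have hgd : ∀ u, -(‖A ustar‖ * ‖A (u - xbar)‖) ≤ g u - g xbar := by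
    intro u
    have h := hsubgrad u
    have hadj : (inner ℝ (-(ContinuousLinearMap.adjoint A (A ustar))) (u - xbar) : ℝ)
        = -⟪A ustar, A (u - xbar)⟫ := by
      rw [inner_neg_left, ContinuousLinearMap.adjoint_inner_left]
    rw [hadj] at h
    have hcs : ⟪A ustar, A (u - xbar)⟫ ≤ ‖A ustar‖ * ‖A (u - xbar)‖ := real_inner_le_norm _ _
    linarith
  -- the invariant
  have hInv : ∀ k : ℕ, ((Sig k + lam)/2)*‖x k - xbar‖^2 + (Sig k)^2*(f (s k) - f xbar)
      + Sig k*(g (s k) - g xbar) ≤ lam*‖x 0 - xbar‖^2/2 := by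
    intro k; induction k with
    | zero =>
      have h0 : Sig 0 = 0 := by rw [hSig]; simp
      rw [h0]; linarith
    | succ k ih =>
      set v := ContinuousLinearMap.adjoint A (A (z k) - b) with hv
      set c := x k - (τ k * Sig (k+1)) • v with hc
      have hS'ne : Sig (k+1) ≠ 0 := (hS'pos k).ne'
      -- strongly convex prox inequality at xbar
      have hsc : ∀ t : ℝ, 0 < t → t < 1 →
          ((1+τ k)/2)*(1-t)*‖x (k+1) - xbar‖^2
            + (τ k * g (x (k+1)) + (1/2)*‖x (k+1) - c‖^2)
          ≤ τ k * g xbar + (1/2)*‖xbar - c‖^2 := by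
        intro t ht0 ht1
        have hcomb := hgstrong.2 (Set.mem_univ (x (k+1))) (Set.mem_univ xbar)
            (by linarith : (0:ℝ) ≤ 1 - t) ht0.le (by ring : (1-t) + t = 1)
        simp only [smul_eq_mul] at hcomb
        have hn1 := combo_norm_sq (x (k+1)) xbar (1-t) t (by ring)
        have hvt : (1-t) • x (k+1) + t • xbar - c = (1-t) • (x (k+1) - c) + t • (xbar - c) := by
          rw [hc]; module
        have hn2' : ‖(1-t) • x (k+1) + t • xbar - c‖^2
            = (1-t)*‖x (k+1) - c‖^2 + t*‖xbar - c‖^2 - t*(1-t)*‖x (k+1) - xbar‖^2 := by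
          rw [hvt, combo_norm_sq _ _ _ _ (by ring : (1-t)+t = 1)]
          have h : x (k+1) - c - (xbar - c) = x (k+1) - xbar := by abel
          rw [h]; ring
        have hpx := hprox k ((1-t) • x (k+1) + t • xbar)
        have hcombτ := mul_le_mul_of_nonneg_left hcomb (hτpos k).le
        have hn1τ : τ k * ‖(1-t) • x (k+1) + t • xbar‖^2
            = τ k * ((1-t)*‖x (k+1)‖^2 + t*‖xbar‖^2 - t*(1-t)*‖x (k+1) - xbar‖^2) := by
          rw [hn1]; ring
        have hstept : t*(((1+τ k)/2)*(1-t)*‖x (k+1) - xbar‖^2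
            + (τ k * g (x (k+1)) + (1/2)*‖x (k+1) - c‖^2))
            ≤ t*(τ k * g xbar + (1/2)*‖xbar - c‖^2) := by
          linarith [hpx, hcombτ, hn1τ, hn2']
        exact le_of_mul_le_mul_left hstept ht0
      have H1raw : ((1+τ k)/2)*‖x (k+1) - xbar‖^2
          + (τ k * g (x (k+1)) + (1/2)*‖x (k+1) - c‖^2)
          ≤ τ k * g xbar + (1/2)*‖xbar - c‖^2 := by
        refine le_of_forall_pos_le_add fun ε hε => ?_
        have hMnn : 0 ≤ ((1+τ k)/2)*‖x (k+1) - xbar‖^2 :=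
          mul_nonneg (by linarith [hτpos k]) (sq_nonneg _)
        have hden : (0:ℝ) < ((1+τ k)/2)*‖x (k+1) - xbar‖^2 + 1 := by linarith
        have ht0 : 0 < min (1/2) (ε/(((1+τ k)/2)*‖x (k+1) - xbar‖^2 + 1)) :=
          lt_min (by norm_num) (div_pos hε hden)
        have ht1 : min (1/2) (ε/(((1+τ k)/2)*‖x (k+1) - xbar‖^2 + 1)) < 1 :=
          lt_of_le_of_lt (min_le_left _ _) (by norm_num)
        have h := hsc _ ht0 ht1
        have htM : (min (1/2) (ε/(((1+τ k)/2)*‖x (k+1) - xbar‖^2 + 1)))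
            * (((1+τ k)/2)*‖x (k+1) - xbar‖^2) ≤ ε := by
          have h1 : min (1/2) (ε/(((1+τ k)/2)*‖x (k+1) - xbar‖^2 + 1))
              ≤ ε/(((1+τ k)/2)*‖x (k+1) - xbar‖^2 + 1) := min_le_right _ _
          have h2 := mul_le_mul_of_nonneg_right h1 hMnn
          have h3 : (ε/(((1+τ k)/2)*‖x (k+1) - xbar‖^2 + 1))
              * (((1+τ k)/2)*‖x (k+1) - xbar‖^2) ≤ ε := by
            rw [div_mul_eq_mul_div, div_le_iff₀ hden]
            nlinarith [hMnn, hε]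
          linarith
        linarith [h, htM]
      -- expansion of the prox quadratic
      have hcexp : ∀ u, ‖u - c‖^2 = ‖u - x k‖^2 + 2*((τ k * Sig (k+1))*⟪v, u - x k⟫)
          + (τ k * Sig (k+1))^2*‖v‖^2 := by
        intro u
        have h : u - c = (u - x k) + (τ k * Sig (k+1)) • v := by rw [hc]; abel
        rw [h, norm_add_sq_real, real_inner_smul_right, norm_smul, Real.norm_eq_abs,
          mul_pow, sq_abs, real_inner_comm]
        all_goals ring
      have H1exp : ((1+τ k)/2)*‖x (k+1) - xbar‖^2 + τ k * g (x (k+1))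
          + (1/2)*‖x (k+1) - x k‖^2 + (τ k * Sig (k+1))*⟪v, x (k+1) - x k⟫
          ≤ τ k * g xbar + (1/2)*‖x k - xbar‖^2 + (τ k * Sig (k+1))*⟪v, xbar - x k⟫ := by
        have e1 := hcexp (x (k+1))
        have e2 := hcexp xbar
        have e3 : ‖xbar - x k‖^2 = ‖x k - xbar‖^2 := by rw [norm_sub_rev]
        linarith [H1raw, e1, e2, e3]
      have H1m := mul_le_mul_of_nonneg_left H1exp (hSl k).le
      rw [hS'P k] at H1m
      -- f expansion for s (k+1)
      have hAv : ∀ w', ⟪A (z k) - b, A w'⟫ = ⟪v, w'⟫ := by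
        intro w'; rw [hv, ContinuousLinearMap.adjoint_inner_left]
      have hdz : s (k+1) - z k = (Sig (k+1))⁻¹ • (σ k • (x (k+1) - x k)) := by
        rw [hsrec k, hz k]; module
      have hd : Sig (k+1) • (s (k+1) - z k) = ((Sig k + lam)*τ k) • (x (k+1) - x k) := by
        rw [hdz, smul_smul, mul_inv_cancel₀ hS'ne, one_smul, hσk k]
      have hdA : Sig (k+1) • A (s (k+1) - z k) = ((Sig k + lam)*τ k) • A (x (k+1) - x k) := by
        rw [← map_smul, ← map_smul, hd]
      have h_in : Sig (k+1) * ⟪A (z k) - b, A (s (k+1) - z k)⟫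
          = ((Sig k + lam)*τ k) * ⟪A (z k) - b, A (x (k+1) - x k)⟫ := by
        rw [← real_inner_smul_right, ← real_inner_smul_right, hdA]
      have h_nm : Sig (k+1)^2 * ‖A (s (k+1) - z k)‖^2
          = ((Sig k + lam)*τ k)^2 * ‖A (x (k+1) - x k)‖^2 := by
        have h' : ‖Sig (k+1) • A (s (k+1) - z k)‖^2
            = ‖((Sig k + lam)*τ k) • A (x (k+1) - x k)‖^2 := by rw [hdA]
        rw [norm_smul, norm_smul, Real.norm_eq_abs, Real.norm_eq_abs, mul_pow, mul_pow,
          sq_abs, sq_abs] at h'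
        exact h'
      have hP2 : ((Sig k+lam)*τ k)^2 = (Sig k+lam)*lam := by
        linear_combination (Sig k+lam)*hlamS k
      have H2f : Sig (k+1)^2 * f (s (k+1)) = Sig (k+1)^2 * f (z k)
          + ((Sig k + lam)*τ k)*Sig (k+1)*⟪v, x (k+1) - x k⟫
          + ((Sig k+lam)*lam/2)*‖A (x (k+1) - x k)‖^2 := by
        have e := fexp (s (k+1)) (z k)
        have ha := hAv (x (k+1) - x k)
        linear_combination Sig (k+1)^2 * e + Sig (k+1) * h_in + (1/2)*h_nm
          + (((Sig k + lam)*τ k)*Sig (k+1))*ha + ((1/2)*‖A (x (k+1) - x k)‖^2)*hP2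
      rw [hS'P k] at H2f
      -- F3
      have hAop : ‖A (x (k+1) - x k)‖ ≤ ‖A‖ * ‖x (k+1) - x k‖ := A.le_opNorm _
      have hAop2 : ‖A (x (k+1) - x k)‖^2 ≤ ‖A‖^2 * ‖x (k+1) - x k‖^2 := by
        nlinarith [norm_nonneg (A (x (k+1) - x k)), norm_nonneg (x (k+1) - x k),
          A.opNorm_nonneg]
      have F3 : ((Sig k+lam)*lam/2)*‖A (x (k+1) - x k)‖^2
          ≤ ((Sig k+lam)/2)*‖x (k+1) - x k‖^2 := by
        have T1 : 0 ≤ (Sig k+lam)*lam*(‖A‖^2*‖x (k+1) - x k‖^2 - ‖A (x (k+1) - x k)‖^2) :=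
          mul_nonneg (mul_nonneg (hSl k).le hlam.le) (by linarith)
        have T2 : 0 ≤ (1 - lam*‖A‖^2)*((Sig k+lam)*‖x (k+1) - x k‖^2) :=
          mul_nonneg (by linarith) (mul_nonneg (hSl k).le (sq_nonneg _))
        nlinarith [T1, T2]
      -- F4, F5
      have F4 : ((Sig k+lam)*τ k)*(Sig k + (Sig k+lam)*τ k)*⟪v, xbar - z k⟫
          = ((Sig k+lam)*τ k)*(Sig k + (Sig k+lam)*τ k)*(f xbar - f (z k))
            - (((Sig k+lam)*τ k)*(Sig k + (Sig k+lam)*τ k)/2)*‖A (xbar - z k)‖^2 := by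
        have e := fexp xbar (z k)
        have ha := hAv (xbar - z k)
        linear_combination (-(((Sig k+lam)*τ k)*(Sig k + (Sig k+lam)*τ k)))*e
          + (-(((Sig k+lam)*τ k)*(Sig k + (Sig k+lam)*τ k)))*ha
      have F5 : Sig k*(Sig k + (Sig k+lam)*τ k)*⟪v, s k - z k⟫
          = Sig k*(Sig k + (Sig k+lam)*τ k)*(f (s k) - f (z k))
            - (Sig k*(Sig k + (Sig k+lam)*τ k)/2)*‖A (s k - z k)‖^2 := by
        have e := fexp (s k) (z k)
        have ha := hAv (s k - z k)
        linear_combination (-(Sig k*(Sig k + (Sig k+lam)*τ k)))*e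
          + (-(Sig k*(Sig k + (Sig k+lam)*τ k)))*ha
      -- F6
      have hzv : Sig (k+1) • z k = σ k • x k + Sig k • s k := by
        rw [hz k, smul_smul, mul_inv_cancel₀ hS'ne, one_smul]
      have hvec6 : σ k • (z k - x k) = Sig k • (s k - z k) := by
        have h := hzv
        rw [hS1 k, add_smul] at h
        linear_combination (norm := module) h
      have hs6 : ((Sig k+lam)*τ k) * ⟪v, z k - x k⟫ = Sig k * ⟪v, s k - z k⟫ := by
        rw [← real_inner_smul_right, ← real_inner_smul_right, ← hσk k, hvec6]
      have hsplit : ⟪v, xbar - x k⟫ = ⟪v, xbar - z k⟫ + ⟪v, z k - x k⟫ := by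
        rw [← inner_add_right]; congr 1; abel
      have F6 : ((Sig k+lam)*τ k)*(Sig k + (Sig k+lam)*τ k)*⟪v, xbar - x k⟫
          = ((Sig k+lam)*τ k)*(Sig k + (Sig k+lam)*τ k)*⟪v, xbar - z k⟫
            + Sig k*(Sig k + (Sig k+lam)*τ k)*⟪v, s k - z k⟫ := by
        linear_combination (((Sig k+lam)*τ k)*(Sig k + (Sig k+lam)*τ k))*hsplit
          + (Sig k + (Sig k+lam)*τ k)*hs6
      -- F7
      have hfds := hfdiff (s k)
      have hACsub : A (s k - xbar) = A (s k - z k) - A (xbar - z k) := by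
        rw [← map_sub]; congr 1; abel
      have e2' : ‖A (s k - z k) - A (xbar - z k)‖^2
          = ‖A (s k - z k)‖^2 - 2*⟪A (s k - z k), A (xbar - z k)⟫ + ‖A (xbar - z k)‖^2 :=
        norm_sub_sq_real _ _
      have e1' : ‖Sig k • A (s k - z k) + ((Sig k+lam)*τ k) • A (xbar - z k)‖^2
          = Sig k^2*‖A (s k - z k)‖^2
            + 2*(Sig k*((Sig k+lam)*τ k))*⟪A (s k - z k), A (xbar - z k)⟫
            + ((Sig k+lam)*τ k)^2*‖A (xbar - z k)‖^2 := by
        rw [norm_add_sq_real, real_inner_smul_left, real_inner_smul_right, norm_smul,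
          norm_smul, Real.norm_eq_abs, Real.norm_eq_abs, mul_pow, mul_pow, sq_abs, sq_abs]
        ring
      have key7 : 0 ≤ ‖Sig k • A (s k - z k) + ((Sig k+lam)*τ k) • A (xbar - z k)‖^2 :=
        sq_nonneg _
      have e5 : (Sig k*(Sig k + (Sig k+lam)*τ k)/2)*‖A (s k - z k)‖^2
          + (((Sig k+lam)*τ k)*(Sig k + (Sig k+lam)*τ k)/2)*‖A (xbar - z k)‖^2
          - ((Sig k+lam)*τ k)*Sig k*(f (s k) - f xbar)
          = (1/2)*‖Sig k • A (s k - z k) + ((Sig k+lam)*τ k) • A (xbar - z k)‖^2 := by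
        rw [hfds, hACsub, e2']
        linear_combination (-(1:ℝ)/2)*e1'
      have F7 : ((Sig k+lam)*τ k)*Sig k*(f (s k) - f xbar)
          ≤ (Sig k*(Sig k + (Sig k+lam)*τ k)/2)*‖A (s k - z k)‖^2
            + (((Sig k+lam)*τ k)*(Sig k + (Sig k+lam)*τ k)/2)*‖A (xbar - z k)‖^2 := by
        linarith [e5, key7]
      -- F8 (Jensen for g)
      have ha' : (0:ℝ) ≤ (Sig (k+1))⁻¹ * σ k :=
        mul_nonneg (inv_nonneg.2 (hS'pos k).le) (hσpos k).le
      have hb' : (0:ℝ) ≤ (Sig (k+1))⁻¹ * Sig k :=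
        mul_nonneg (inv_nonneg.2 (hS'pos k).le) (hSnn k)
      have hab : (Sig (k+1))⁻¹ * σ k + (Sig (k+1))⁻¹ * Sig k = 1 := by
        rw [← mul_add]
        have h : σ k + Sig k = Sig (k+1) := by rw [hS1 k]; ring
        rw [h, inv_mul_cancel₀ hS'ne]
      have hsplus : s (k+1) = ((Sig (k+1))⁻¹ * σ k) • x (k+1)
          + ((Sig (k+1))⁻¹ * Sig k) • s k := by
        rw [hsrec k, smul_add, smul_smul, smul_smul]
      have hcomb8 := hgstrong.2 (Set.mem_univ (x (k+1))) (Set.mem_univ (s k)) ha' hb' hab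
      simp only [smul_eq_mul] at hcomb8
      have hn8 := combo_norm_sq (x (k+1)) (s k) _ _ hab
      have hgu : g (s (k+1)) ≤ ((Sig (k+1))⁻¹ * σ k)*g (x (k+1))
          + ((Sig (k+1))⁻¹ * Sig k)*g (s k) := by
        rw [hsplus]
        linarith [hcomb8, hn8,
          mul_nonneg (mul_nonneg ha' hb') (sq_nonneg ‖x (k+1) - s k‖)]
      have hm8 := mul_le_mul_of_nonneg_left hgu (hS'pos k).le
      have hconv8 : Sig (k+1)*(((Sig (k+1))⁻¹ * σ k)*g (x (k+1))
          + ((Sig (k+1))⁻¹ * Sig k)*g (s k)) = σ k*g (x (k+1)) + Sig k*g (s k) := by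
        field_simp
      have F8 : (Sig k + (Sig k+lam)*τ k)*g (s (k+1))
          ≤ ((Sig k+lam)*τ k)*g (x (k+1)) + Sig k*g (s k) := by
        rw [← hS'P k, ← hσk k]
        linarith [hm8, hconv8]
      -- combine everything
      rw [hS'P k]
      linarith [ih, H1m, H2f, F3, F4, F5, F6, F7, F8]
  -- key scalar inequality
  have hKI : ∀ k : ℕ, ((Sig k + lam)/2)*‖x k - xbar‖^2 + (Sig k)^2*(f (s k) - f xbar)
      ≤ lam*‖x 0 - xbar‖^2/2 + Sig k*(‖A ustar‖*‖A (s k - xbar)‖) := by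
    intro k
    have h1 := hInv k
    have h2 := mul_le_mul_of_nonneg_left (hgd (s k)) (hSnn k)
    nlinarith [h1, h2]
  have hF0 : ∀ k : ℕ, 0 ≤ f (s k) - f xbar := fun k => by linarith [hxbar_f (s k)]
  have hAn : ∀ k : ℕ, ‖A (s k - xbar)‖ = Real.sqrt 2 * Real.sqrt (f (s k) - f xbar) := by
    intro k
    have hF := hfdiff (s k)
    have h2F : 2*(f (s k) - f xbar) = ‖A (s k - xbar)‖^2 := by linarith
    have h : ‖A (s k - xbar)‖ = Real.sqrt (2*(f (s k) - f xbar)) := by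
      rw [h2F, Real.sqrt_sq (norm_nonneg _)]
    rw [h, Real.sqrt_mul (by norm_num : (0:ℝ) ≤ 2)]
  have h2 : Real.sqrt 2^2 = 2 := Real.sq_sqrt (by norm_num)
  have h2p : (0:ℝ) < Real.sqrt 2 := Real.sqrt_pos.2 (by norm_num)
  have hR2 : Real.sqrt (‖A ustar‖^2 + lam*‖x 0 - xbar‖^2)^2
      = ‖A ustar‖^2 + lam*‖x 0 - xbar‖^2 := Real.sq_sqrt (by positivity)
  have hR0 : 0 ≤ Real.sqrt (‖A ustar‖^2 + lam*‖x 0 - xbar‖^2) := Real.sqrt_nonneg _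
  -- part 1
  have part1 : ∀ k : ℕ, 1 ≤ k → Sig k * Real.sqrt (f (s k) - f xbar)
      ≤ (‖A ustar‖ + Real.sqrt (‖A ustar‖ ^ 2 + lam * ‖x 0 - xbar‖ ^ 2)) / Real.sqrt 2 := by
    intro k _
    have hsqF := Real.sq_sqrt (hF0 k)
    have h1 := hKI k
    rw [hAn k] at h1
    have hdrop : 0 ≤ ((Sig k + lam)/2)*‖x k - xbar‖^2 :=
      mul_nonneg (by linarith [hSl k]) (sq_nonneg _)
    have husq : (Sig k*Real.sqrt (f (s k) - f xbar))^2
        = Sig k^2*(f (s k) - f xbar) := by rw [mul_pow, hsqF]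
    have hu2 : (Sig k*Real.sqrt (f (s k) - f xbar))^2
        ≤ lam*‖x 0 - xbar‖^2/2
          + Real.sqrt 2*(‖A ustar‖*(Sig k*Real.sqrt (f (s k) - f xbar))) := by
      nlinarith [h1, husq, hdrop]
    have hu0 : 0 ≤ Sig k*Real.sqrt (f (s k) - f xbar) :=
      mul_nonneg (hSnn k) (Real.sqrt_nonneg _)
    rw [le_div_iff₀ h2p]
    have htsq : (Sig k*Real.sqrt (f (s k) - f xbar)*Real.sqrt 2)^2
        ≤ lam*‖x 0 - xbar‖^2
          + 2*‖A ustar‖*(Sig k*Real.sqrt (f (s k) - f xbar)*Real.sqrt 2) := by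
      rw [mul_pow, h2]
      nlinarith [hu2]
    have hmid : (Sig k*Real.sqrt (f (s k) - f xbar)*Real.sqrt 2 - ‖A ustar‖)^2
        ≤ Real.sqrt (‖A ustar‖^2 + lam*‖x 0 - xbar‖^2)^2 := by
      rw [hR2]
      nlinarith [htsq]
    nlinarith [hmid, hR0]
  refine ⟨part1, ?_, ?_⟩
  · -- part 2
    intro k _
    have hsqF := Real.sq_sqrt (hF0 k)
    have h1 := hKI k
    rw [hAn k] at h1
    have husq : (Sig k*Real.sqrt (f (s k) - f xbar))^2
        = Sig k^2*(f (s k) - f xbar) := by rw [mul_pow, hsqF]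
    have hu0 : 0 ≤ Sig k*Real.sqrt (f (s k) - f xbar) :=
      mul_nonneg (hSnn k) (Real.sqrt_nonneg _)
    have h2u : (Real.sqrt 2)^2*(Sig k*Real.sqrt (f (s k) - f xbar))^2
        = 2*(Sig k*Real.sqrt (f (s k) - f xbar))^2 := by rw [h2]
    have hbd : Real.sqrt 2*(‖A ustar‖*(Sig k*Real.sqrt (f (s k) - f xbar)))
        ≤ (Sig k*Real.sqrt (f (s k) - f xbar))^2 + ‖A ustar‖^2/2 := by
      nlinarith [sq_nonneg (Real.sqrt 2*(Sig k*Real.sqrt (f (s k) - f xbar)) - ‖A ustar‖),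
        h2u]
    have hx2 : ‖x k - xbar‖^2*(Sig k+lam) ≤ lam*‖x 0 - xbar‖^2 + ‖A ustar‖^2 := by
      nlinarith [h1, husq, hbd]
    have hk2 : (0:ℝ) < ((k:ℝ)+2)^2 := by positivity
    have heq : (‖x 0 - xbar‖^2 + ‖A ustar‖^2/lam)*(9/((k:ℝ)+2)^2)
        = ((lam*‖x 0 - xbar‖^2 + ‖A ustar‖^2)*9)/(lam*((k:ℝ)+2)^2) := by
      field_simp
    rw [heq, le_div_iff₀ (by positivity)]
    have h4 : ‖x k - xbar‖^2*((Sig k+lam)*τ k^2) = ‖x k - xbar‖^2*lam := by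
      rw [hlamS k]
    have h5' := mul_le_mul_of_nonneg_right hx2 (sq_nonneg (τ k))
    have h5 : ‖x k - xbar‖^2*lam ≤ (lam*‖x 0 - xbar‖^2 + ‖A ustar‖^2)*τ k^2 := by
      nlinarith [h4, h5']
    have ha : τ k*((k:ℝ)+2) ≤ 3 := by
      rw [← le_div_iff₀ (by positivity : (0:ℝ) < (k:ℝ)+2)]; exact hτle k
    have ha0 : 0 ≤ τ k*((k:ℝ)+2) :=
      mul_nonneg (hτpos k).le (by positivity)
    have h3 : τ k^2*((k:ℝ)+2)^2 ≤ 9 := by nlinarith [ha, ha0]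
    have h7 := mul_le_mul_of_nonneg_right h5 (sq_nonneg ((k:ℝ)+2))
    have h8 := mul_le_mul_of_nonneg_left h3
      (by positivity : (0:ℝ) ≤ lam*‖x 0 - xbar‖^2 + ‖A ustar‖^2)
    nlinarith [h7, h8]
  · -- part 3
    refine ⟨81*((‖A ustar‖ + Real.sqrt (‖A ustar‖^2 + lam*‖x 0 - xbar‖^2))/Real.sqrt 2)^2
      /lam^2, ?_⟩
    intro k hk
    have hk1 : (1:ℝ) ≤ (k:ℝ) := by exact_mod_cast hk
    have hU0 : 0 ≤ (‖A ustar‖ + Real.sqrt (‖A ustar‖^2 + lam*‖x 0 - xbar‖^2))/Real.sqrt 2 := by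
      positivity
    have hSk : lam*(k:ℝ)^2/9 ≤ Sig k := by
      rcases Nat.lt_or_ge k 2 with hlt | hge
      · interval_cases k
        · have hs1 : Sig 1 = lam := by
            rw [hSig, Finset.sum_range_one, hσ, hτ0, div_one]
          rw [hs1]
          norm_num
          linarith
      · have hk2R : (2:ℝ) ≤ (k:ℝ) := by exact_mod_cast hge
        have hτ2pos := pow_pos (hτpos k) 2
        have ha : τ k*((k:ℝ)+2) ≤ 3 := by
          rw [← le_div_iff₀ (by positivity : (0:ℝ) < (k:ℝ)+2)]; exact hτle k
        have ha0 : 0 ≤ τ k*((k:ℝ)+2) := mul_nonneg (hτpos k).le (by positivity)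
        have h3 : τ k^2*((k:ℝ)+2)^2 ≤ 9 := by nlinarith [ha, ha0]
        have h9 : τ k^2*((k:ℝ)^2+9) ≤ 9 := by
          nlinarith [h3, mul_nonneg hτ2pos.le (by linarith : (0:ℝ) ≤ 4*(k:ℝ)-5)]
        have hSτ : Sig k*τ k^2 = lam - lam*τ k^2 := by linear_combination hlamS k
        have h10 := mul_le_mul_of_nonneg_left h9 hlam.le
        have goal' : lam*(k:ℝ)^2/9*τ k^2 ≤ Sig k*τ k^2 := by
          rw [hSτ]; nlinarith [h10]
        exact le_of_mul_le_mul_right goal' hτ2pos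
    have hSpos : 0 < Sig k := by
      have h1 : (0:ℝ) < lam*(k:ℝ)^2 := mul_pos hlam (by nlinarith [hk1])
      linarith [hSk]
    have hsqF := Real.sq_sqrt (hF0 k)
    have hpart := part1 k hk
    have hmul := mul_le_mul hpart hpart
      (mul_nonneg (hSnn k) (Real.sqrt_nonneg _)) hU0
    have husq : Sig k*Real.sqrt (f (s k) - f xbar)*(Sig k*Real.sqrt (f (s k) - f xbar))
        = Sig k^2*(f (s k) - f xbar) := by
      rw [show Sig k*Real.sqrt (f (s k) - f xbar)*(Sig k*Real.sqrt (f (s k) - f xbar))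
        = Sig k^2*(Real.sqrt (f (s k) - f xbar))^2 from by ring, hsqF]
    have hFS2 : (f (s k) - f xbar)*(Sig k*Sig k)
        ≤ ((‖A ustar‖ + Real.sqrt (‖A ustar‖^2 + lam*‖x 0 - xbar‖^2))/Real.sqrt 2)^2 := by
      nlinarith [hmul, husq]
    have hSk2 := mul_le_mul hSk hSk (by positivity : (0:ℝ) ≤ lam*(k:ℝ)^2/9) (hSnn k)
    have hstep1 := mul_le_mul_of_nonneg_left hSk2 (hF0 k)
    have hkpos : (0:ℝ) < (k:ℝ) := by linarith
    have hk4 : (0:ℝ) < (k:ℝ)^4 := pow_pos hkpos 4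
    rw [div_div, le_div_iff₀ (mul_pos (pow_pos hlam 2) hk4)]
    linarith [hstep1, hFS2]
end
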